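/- arXiv:1707.00213 — 3 statements merged into one kernel-verified Lean document; each statement's English description precedes it below -/
import Mathlib

section
/- In the setting of the invariant ξ attached to a quaternion embedding (B, α1, α2) of a pair of quadratic étale F-algebras (K1, K2): the triple (B, α1, α2) is regular (i.e., α1(K1) ∪ α2(K2) generates B as an F-algebra) if and only if ξ is a unit in K3. -/
open scoped TensorProduct
universe u

noncomputable section QDsec

variable {F : Type u} [Field F] {K : Type u} [CommRing K] [Algebra F K]

structure QD (F : Type u) [Field F] (K : Type u) [CommRing K] [Algebra F K]
    (σ : K ≃ₐ[F] K) : Type u where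
  a : K
  ta : F
  na : F
  bas : Module.Basis (Fin 2) F K
  hb0 : bas 0 = 1
  hb1 : bas 1 = a
  hq : a * a = algebraMap F K ta * a - algebraMap F K na
  hσa : σ a = algebraMap F K ta - a

theorem QD.repr0 {σ : K ≃ₐ[F] K} (q : QD F K σ) (c d : F) :
    q.bas.repr (c • (1 : K) + d • q.a) 0 = c := by
  rw [← q.hb0, ← q.hb1, map_add, map_smul, map_smul, q.bas.repr_self, q.bas.repr_self]
  simp

theorem QD.repr1 {σ : K ≃ₐ[F] K} (q : QD F K σ) (c d : F) :
    q.bas.repr (c • (1 : K) + d • q.a) 1 = d := by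
  rw [← q.hb0, ← q.hb1, map_add, map_smul, map_smul, q.bas.repr_self, q.bas.repr_self]
  simp

theorem QD.coords {σ : K ≃ₐ[F] K} (q : QD F K σ) (x : K) :
    x = q.bas.repr x 0 • (1 : K) + q.bas.repr x 1 • q.a := by
  have h := q.bas.sum_repr x
  rw [Fin.sum_univ_two, q.hb0, q.hb1] at h
  exact h.symm

theorem QD.mul_a_combo {σ : K ≃ₐ[F] K} (q : QD F K σ) (c0 c1 : F) :
    (c0 • (1 : K) + c1 • q.a) * q.a =
      (-(c1 * q.na)) • (1 : K) + (c0 + c1 * q.ta) • q.a := by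
  simp only [Algebra.smul_def, map_neg, map_mul, map_add, mul_one]
  linear_combination algebraMap F K c1 * q.hq

theorem QD.trace_helper {σ : K ≃ₐ[F] K} (q : QD F K σ) (f : Module.End F K)
    (u0 u1 v0 v1 : F)
    (h0 : f 1 = u0 • (1 : K) + u1 • q.a) (h1 : f q.a = v0 • (1 : K) + v1 • q.a) :
    LinearMap.trace F K f = u0 + v1 := by
  classical
  rw [LinearMap.trace_eq_matrix_trace F q.bas, Matrix.trace, Fin.sum_univ_two]
  simp only [Matrix.diag_apply, LinearMap.toMatrix_apply, q.hb0, q.hb1, h0, h1]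
  rw [q.repr0, q.repr1]

theorem QD.trace_one' {σ : K ≃ₐ[F] K} (q : QD F K σ) : Algebra.trace F K 1 = 2 := by
  rw [Algebra.trace_apply]
  have := q.trace_helper (Algebra.lmul F K 1) 1 0 0 1 (by simp) (by simp)
  rw [this]; norm_num

theorem QD.trace_a {σ : K ≃ₐ[F] K} (q : QD F K σ) : Algebra.trace F K q.a = q.ta := by
  rw [Algebra.trace_apply]
  have := q.trace_helper (Algebra.lmul F K q.a) 0 1 (-q.na) q.ta
    (by simp) (by simpa using q.mul_a_combo 0 1)
  rw [this]; ring

theorem QD.trace_sigma {σ : K ≃ₐ[F] K} (q : QD F K σ) (c : K) :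
    LinearMap.trace F K (σ.toLinearMap ∘ₗ LinearMap.mulLeft F c) = 0 := by
  have hσ1 : σ (1 : K) = 1 := map_one σ
  set c0 := q.bas.repr c 0 with hc0def
  set c1 := q.bas.repr c 1 with hc1def
  have hc : c = c0 • (1 : K) + c1 • q.a := q.coords c
  have h0 : (σ.toLinearMap ∘ₗ LinearMap.mulLeft F c) 1 =
      (c0 + c1 * q.ta) • (1 : K) + (-c1) • q.a := by
    simp only [LinearMap.comp_apply, LinearMap.mulLeft_apply, AlgEquiv.toLinearMap_apply,
      mul_one]
    rw [hc, map_add, map_smul, map_smul, hσ1, q.hσa]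
    simp only [Algebra.smul_def, map_add, map_mul, map_neg, mul_one]
    ring
  have h1 : (σ.toLinearMap ∘ₗ LinearMap.mulLeft F c) q.a =
      (-(c1 * q.na) + (c0 + c1 * q.ta) * q.ta) • (1 : K) + (-(c0 + c1 * q.ta)) • q.a := by
    simp only [LinearMap.comp_apply, LinearMap.mulLeft_apply, AlgEquiv.toLinearMap_apply]
    rw [hc, q.mul_a_combo, map_add, map_smul, map_smul, hσ1, q.hσa]
    simp only [Algebra.smul_def, map_add, map_mul, map_neg, mul_one]
    ring
  have := q.trace_helper _ _ _ _ _ h0 h1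
  rw [this]; ring

theorem QD.nd {σ : K ≃ₐ[F] K} (q : QD F K σ) (hd : q.ta ^ 2 - 4 * q.na ≠ 0) (c : K)
    (h1 : Algebra.trace F K c = 0) (h2 : Algebra.trace F K (c * q.a) = 0) : c = 0 := by
  set c0 := q.bas.repr c 0 with hc0def
  set c1 := q.bas.repr c 1 with hc1def
  have hc : c = c0 • (1 : K) + c1 • q.a := q.coords c
  have e1 : c0 * 2 + c1 * q.ta = 0 := by
    rw [hc, map_add, map_smul, map_smul, q.trace_one', q.trace_a] at h1
    simpa [smul_eq_mul, mul_comm] using h1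
  have e2 : -(c1 * q.na) * 2 + (c0 + c1 * q.ta) * q.ta = 0 := by
    rw [hc, q.mul_a_combo, map_add, map_smul, map_smul, q.trace_one', q.trace_a] at h2
    simpa [smul_eq_mul] using h2
  have hc1 : c1 = 0 := by
    have h : (q.ta ^ 2 - 4 * q.na) * c1 = 0 := by linear_combination (-q.ta) * e1 + 2 * e2
    exact (mul_eq_zero.1 h).resolve_left hd
  have hc0 : c0 = 0 := by
    rw [hc1] at e1 e2
    have h : (q.ta ^ 2 - 4 * q.na) * c0 = 0 := by linear_combination q.ta * e2 - 2 * q.na * e1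
    exact (mul_eq_zero.1 h).resolve_left hd
  rw [hc, hc0, hc1]; simp

theorem QD.disc_ne {σ : K ≃ₐ[F] K} (q : QD F K σ) [Algebra.Etale F K] [Nontrivial K] :
    q.ta ^ 2 - 4 * q.na ≠ 0 := by
  intro hd
  have hδ0 : (algebraMap F K 2 * q.a - algebraMap F K q.ta)
      * (algebraMap F K 2 * q.a - algebraMap F K q.ta) = 0 := by
    have h4 : (algebraMap F K 2 * q.a - algebraMap F K q.ta)
        * (algebraMap F K 2 * q.a - algebraMap F K q.ta)
        = algebraMap F K (q.ta ^ 2 - 4 * q.na) := by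
      simp only [map_sub, map_mul, map_add, map_pow, map_ofNat]
      linear_combination (4 : K) * q.hq
    rw [h4, hd, map_zero]
  obtain ⟨w, hw, wne⟩ : ∃ w : K,
      (algebraMap F K 2 * q.a - algebraMap F K q.ta) * w = 0 ∧ w ≠ 0 := by
    rcases eq_or_ne (algebraMap F K 2 * q.a - algebraMap F K q.ta) 0 with h | h
    · exact ⟨1, by rw [h, zero_mul], one_ne_zero⟩
    · exact ⟨_, hδ0, h⟩
  have hw' : (2 : K) * q.a * w - algebraMap F K q.ta * w = 0 := by
    have := hw
    simp only [map_ofNat] at this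
    linear_combination this
  set D : Derivation F K K :=
    { toLinearMap := (q.bas.coord 1).smulRight w
      map_one_eq_zero' := by
        have h1 : (1 : K) = (1 : F) • (1 : K) + (0 : F) • q.a := by simp
        simp only [LinearMap.smulRight_apply, Module.Basis.coord_apply]
        rw [h1, q.repr1, zero_smul]
      leibniz' := by
        intro x y
        simp only [LinearMap.smulRight_apply, Module.Basis.coord_apply, smul_eq_mul]
        set x0 := q.bas.repr x 0 with hx0def
        set x1 := q.bas.repr x 1 with hx1def
        set y0 := q.bas.repr y 0 with hy0def
        set y1 := q.bas.repr y 1 with hy1def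
        have hx : x = x0 • (1 : K) + x1 • q.a := q.coords x
        have hy : y = y0 • (1 : K) + y1 • q.a := q.coords y
        have hxy : x * y = (x0 * y0 - x1 * y1 * q.na) • (1 : K)
            + (x0 * y1 + x1 * y0 + x1 * y1 * q.ta) • q.a := by
          rw [hx, hy]
          simp only [Algebra.smul_def, map_sub, map_mul, map_add, mul_one]
          linear_combination (algebraMap F K x1 * algebraMap F K y1) * q.hq
        have hxA : x = algebraMap F K x0 + algebraMap F K x1 * q.a := by
          rw [hx]; simp [Algebra.smul_def]
        have hyA : y = algebraMap F K y0 + algebraMap F K y1 * q.a := by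
          rw [hy]; simp [Algebra.smul_def]
        rw [hxy, q.repr1, Algebra.smul_def, Algebra.smul_def, Algebra.smul_def, hxA, hyA]
        simp only [map_sub, map_mul, map_add]
        linear_combination (-(algebraMap F K x1 * algebraMap F K y1)) * hw' }
  have hDa : D q.a = w := by
    have h1 : q.a = (0 : F) • (1 : K) + (1 : F) • q.a := by simp
    show ((q.bas.coord 1).smulRight w) q.a = w
    simp only [LinearMap.smulRight_apply, Module.Basis.coord_apply]
    rw [h1, q.repr1, one_smul]
  have h0 : (KaehlerDifferential.D F K) q.a = 0 := Subsingleton.elim _ _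
  have hlift := Derivation.liftKaehlerDifferential_comp_D D q.a
  rw [h0, map_zero] at hlift
  exact wne (by rw [← hDa, ← hlift])

theorem qd_exists (hK : Module.finrank F K = 2) (σ : K ≃ₐ[F] K)
    (hσ : Function.Involutive σ) (hσne : σ ≠ AlgEquiv.refl) : Nonempty (QD F K σ) := by
  have hfd : FiniteDimensional F K := Module.finite_of_finrank_pos (by omega)
  have hnt : Nontrivial K := Module.nontrivial_of_finrank_pos (R := F) (by omega)
  -- elements not in F·1 give bases
  have hbasis : ∀ x : K, (∀ c : F, x ≠ algebraMap F K c) →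
      LinearIndependent F ![(1 : K), x] ∧ Submodule.span F (Set.range ![(1 : K), x]) = ⊤ := by
    intro x hx
    have li : LinearIndependent F ![(1 : K), x] := by
      rw [LinearIndependent.pair_iff]
      intro s t hst
      rcases eq_or_ne t 0 with ht | ht
      · subst ht
        simp only [zero_smul, add_zero, smul_eq_zero] at hst
        rcases hst with h | h
        · exact ⟨h, rfl⟩
        · exact absurd h one_ne_zero
      · exfalso
        apply hx (-(t⁻¹ * s))
        rw [Algebra.smul_def, Algebra.smul_def, mul_one] at hst
        have h2 : algebraMap F K t * x = - algebraMap F K s := by linear_combination hst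
        calc x = algebraMap F K (t⁻¹ * t) * x := by
                rw [inv_mul_cancel₀ ht, map_one, one_mul]
          _ = algebraMap F K t⁻¹ * (algebraMap F K t * x) := by rw [map_mul, mul_assoc]
          _ = algebraMap F K (-(t⁻¹ * s)) := by rw [h2, map_neg, map_mul]; ring
    refine ⟨li, ?_⟩
    apply Submodule.eq_top_of_finrank_eq
    rw [finrank_span_eq_card li, hK]
    simp
  -- find a not in F·1
  have : ∃ a : K, ∀ c : F, a ≠ algebraMap F K c := by
    by_contra h
    push_neg at h
    have : Submodule.span F {(1 : K)} = ⊤ := by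
      rw [Submodule.eq_top_iff']
      intro x
      obtain ⟨c, rfl⟩ := h x
      rw [Algebra.algebraMap_eq_smul_one]
      exact Submodule.smul_mem _ _ (Submodule.mem_span_singleton_self _)
    have h2 := finrank_span_singleton (K := F) (one_ne_zero (α := K))
    rw [this, finrank_top] at h2
    rw [hK] at h2
    exact absurd h2 (by norm_num)
  obtain ⟨a, ha⟩ := this
  obtain ⟨li, hsp⟩ := hbasis a ha
  -- fixed points are scalars
  have hfix : ∀ x : K, σ x = x → ∃ c : F, x = algebraMap F K c := by
    intro x hxfix
    by_contra hc
    push_neg at hc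
    obtain ⟨lix, hspx⟩ := hbasis x hc
    apply hσne
    ext y
    have hy : y ∈ Submodule.span F (Set.range ![(1 : K), x]) := hspx ▸ Submodule.mem_top
    induction hy using Submodule.span_induction with
    | mem z hz =>
      simp only [Set.mem_range] at hz
      obtain ⟨i, rfl⟩ := hz
      fin_cases i
      · simp
      · simpa using hxfix
    | zero => simp
    | add z w _ _ hz hw => simp [map_add, hz, hw]
    | smul c z _ hz => simp [map_smul, hz]
  obtain ⟨ta, hta⟩ := hfix (a + σ a) (by rw [map_add, hσ a]; ring)
  obtain ⟨na, hna⟩ := hfix (a * σ a) (by rw [map_mul, hσ a]; ring)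
  refine ⟨⟨a, ta, na, Module.Basis.mk li (hsp ▸ le_rfl), by simp [Module.Basis.mk_apply], by simp [Module.Basis.mk_apply], ?_, ?_⟩⟩
  · linear_combination a * hta - hna
  · linear_combination hta

end QDsec


section Kside

variable {F : Type u} [Field F] {K1 K2 : Type u} [CommRing K1] [CommRing K2]
  [Algebra F K1] [Algebra F K2]

theorem lmul_tmul (y1 : K1) (y2 : K2) :
    LinearMap.mulLeft F (y1 ⊗ₜ[F] y2) =
      TensorProduct.map (LinearMap.mulLeft F y1) (LinearMap.mulLeft F y2) := by
  apply TensorProduct.ext'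
  intro w1 w2
  simp [Algebra.TensorProduct.tmul_mul_tmul]

theorem trace_tmul [FiniteDimensional F K1] [FiniteDimensional F K2] (y1 : K1) (y2 : K2) :
    Algebra.trace F (K1 ⊗[F] K2) (y1 ⊗ₜ[F] y2)
      = Algebra.trace F K1 y1 * Algebra.trace F K2 y2 := by
  have hl : ∀ (A : Type u) [CommRing A] [Algebra F A] (x : A),
      Algebra.lmul F A x = LinearMap.mulLeft F x := by
    intro A _ _ x
    ext s
    simp
  rw [Algebra.trace_apply, Algebra.trace_apply, Algebra.trace_apply, hl, hl, hl, lmul_tmul,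
    LinearMap.trace_tensorProduct']

theorem trace_tau_mul [FiniteDimensional F K1] [FiniteDimensional F K2]
    {σ1 : K1 ≃ₐ[F] K1} {σ2 : K2 ≃ₐ[F] K2} (q1 : QD F K1 σ1) (q2 : QD F K2 σ2)
    (τ : (K1 ⊗[F] K2) ≃ₐ[F] (K1 ⊗[F] K2)) (hτ : τ = Algebra.TensorProduct.congr σ1 σ2)
    (z : K1 ⊗[F] K2) :
    LinearMap.trace F (K1 ⊗[F] K2) (τ.toLinearMap ∘ₗ LinearMap.mulLeft F z) = 0 := by
  induction z using TensorProduct.induction_on with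
  | zero =>
    have h0 : LinearMap.mulLeft F (0 : K1 ⊗[F] K2) = 0 := by ext s; simp
    rw [h0, LinearMap.comp_zero, map_zero]
  | tmul y1 y2 =>
    have hdec : τ.toLinearMap ∘ₗ LinearMap.mulLeft F (y1 ⊗ₜ[F] y2) =
        TensorProduct.map (σ1.toLinearMap ∘ₗ LinearMap.mulLeft F y1)
          (σ2.toLinearMap ∘ₗ LinearMap.mulLeft F y2) := by
      apply TensorProduct.ext'
      intro w1 w2
      simp [hτ, Algebra.TensorProduct.tmul_mul_tmul]
    rw [hdec, LinearMap.trace_tensorProduct', q1.trace_sigma, zero_mul]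
  | add z1 z2 h1 h2 =>
    have hadd : LinearMap.mulLeft F (z1 + z2)
        = LinearMap.mulLeft F z1 + LinearMap.mulLeft F z2 := by ext s; simp [add_mul]
    rw [hadd, LinearMap.comp_add, map_add, h1, h2, add_zero]

theorem tau_invol {σ1 : K1 ≃ₐ[F] K1} {σ2 : K2 ≃ₐ[F] K2}
    (hσ1 : Function.Involutive σ1) (hσ2 : Function.Involutive σ2)
    (τ : (K1 ⊗[F] K2) ≃ₐ[F] (K1 ⊗[F] K2)) (hτ : τ = Algebra.TensorProduct.congr σ1 σ2)
    (z : K1 ⊗[F] K2) : τ (τ z) = z := by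
  induction z using TensorProduct.induction_on with
  | zero => simp
  | tmul y1 y2 => simp [hτ, hσ1 y1, hσ2 y2]
  | add z1 z2 h1 h2 => rw [map_add, map_add, h1, h2]

set_option maxHeartbeats 1000000 in
set_option synthInstance.maxHeartbeats 400000 in
theorem trace_fix [FiniteDimensional F K1] [FiniteDimensional F K2]
    {σ1 : K1 ≃ₐ[F] K1} {σ2 : K2 ≃ₐ[F] K2} (q1 : QD F K1 σ1) (q2 : QD F K2 σ2)
    (τ3 : (K1 ⊗[F] K2) ≃ₐ[F] (K1 ⊗[F] K2)) (hτ3 : τ3 = Algebra.TensorProduct.congr σ1 σ2)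
    (hσ1 : Function.Involutive σ1) (hσ2 : Function.Involutive σ2)
    (K3 : Subalgebra F (K1 ⊗[F] K2))
    (hK3 : K3 = AlgHom.equalizer (τ3 : (K1 ⊗[F] K2) →ₐ[F] (K1 ⊗[F] K2))
        (AlgHom.id F (K1 ⊗[F] K2)))
    (z : K1 ⊗[F] K2) (hmem : z + τ3 z ∈ K3) :
    Algebra.trace F K3 ⟨z + τ3 z, hmem⟩ = Algebra.trace F (K1 ⊗[F] K2) z := by
  have hτinv := tau_invol hσ1 hσ2 τ3 hτ3
  have hfix : ∀ s : K3, τ3 (s : K1 ⊗[F] K2) = (s : K1 ⊗[F] K2) := by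
    intro s
    have h2 : (s : K1 ⊗[F] K2) ∈ AlgHom.equalizer
        (τ3 : (K1 ⊗[F] K2) →ₐ[F] (K1 ⊗[F] K2)) (AlgHom.id F (K1 ⊗[F] K2)) := by
      rw [← hK3]; exact s.2
    exact h2
  have hmem' : ∀ y : K1 ⊗[F] K2, y + τ3 y ∈ K3.toSubmodule := by
    intro y
    show y + τ3 y ∈ K3
    rw [hK3]
    show τ3 (y + τ3 y) = y + τ3 y
    rw [map_add, hτinv, add_comm]
  set pl : (K1 ⊗[F] K2) →ₗ[F] K3 :=
    LinearMap.codRestrict K3.toSubmodule (LinearMap.id + τ3.toLinearMap) hmem' with hpl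
  have hplz : (⟨z + τ3 z, hmem⟩ : K3) = pl z := rfl
  have key : Algebra.lmul F K3 (pl z) =
      (pl ∘ₗ LinearMap.mulLeft F z) ∘ₗ K3.toSubmodule.subtype := by
    refine LinearMap.ext fun s => Subtype.ext ?_
    have hcoe1 : ((Algebra.lmul F K3 (pl z) s : K3) : K1 ⊗[F] K2)
        = (z + τ3 z) * (s : K1 ⊗[F] K2) := rfl
    have hcoe2 : ((((pl ∘ₗ LinearMap.mulLeft F z) ∘ₗ K3.toSubmodule.subtype) s : K3) :
        K1 ⊗[F] K2) = (z * (s : K1 ⊗[F] K2)) + τ3 (z * (s : K1 ⊗[F] K2)) := rfl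
    have hmid : (z + τ3 z) * (s : K1 ⊗[F] K2) = z * s + τ3 (z * (s : K1 ⊗[F] K2)) := by
      rw [map_mul, hfix s]
      ring
    exact hcoe1.trans (hmid.trans hcoe2.symm)
  rw [hplz, Algebra.trace_apply, key, LinearMap.trace_comp_comm']
  have hsub : K3.toSubmodule.subtype ∘ₗ (pl ∘ₗ LinearMap.mulLeft F z)
      = (LinearMap.id + τ3.toLinearMap) ∘ₗ LinearMap.mulLeft F z := rfl
  rw [hsub, LinearMap.add_comp, LinearMap.id_comp, map_add,
    trace_tau_mul q1 q2 τ3 hτ3 z, add_zero, Algebra.trace_apply]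
  congr 1

theorem Knd [FiniteDimensional F K1] [FiniteDimensional F K2]
    {σ1 : K1 ≃ₐ[F] K1} {σ2 : K2 ≃ₐ[F] K2} (q1 : QD F K1 σ1) (q2 : QD F K2 σ2)
    (hd1 : q1.ta ^ 2 - 4 * q1.na ≠ 0) (hd2 : q2.ta ^ 2 - 4 * q2.na ≠ 0)
    (x : K1 ⊗[F] K2) (hx : ∀ u : K1 ⊗[F] K2, Algebra.trace F (K1 ⊗[F] K2) (x * u) = 0) :
    x = 0 := by
  obtain ⟨c, c', hdec⟩ : ∃ c c' : K1, x = c ⊗ₜ[F] (1 : K2) + c' ⊗ₜ[F] q2.a := by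
    clear hx
    induction x using TensorProduct.induction_on with
    | zero => exact ⟨0, 0, by simp⟩
    | tmul y1 y2 =>
      refine ⟨q2.bas.repr y2 0 • y1, q2.bas.repr y2 1 • y1, ?_⟩
      conv_lhs => rw [q2.coords y2]
      simp [TensorProduct.tmul_add, TensorProduct.smul_tmul, TensorProduct.tmul_smul]
    | add z1 z2 h1 h2 =>
      obtain ⟨a1, b1, e1⟩ := h1
      obtain ⟨a2, b2, e2⟩ := h2
      refine ⟨a1 + a2, b1 + b2, ?_⟩
      rw [e1, e2, TensorProduct.add_tmul, TensorProduct.add_tmul]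
      abel
  have key : ∀ v : K1, Algebra.trace F K1 (c * v) = 0 ∧ Algebra.trace F K1 (c' * v) = 0 := by
    intro v
    have h2 : ∀ w : K2, Algebra.trace F K1 (c * v) * Algebra.trace F K2 w
        + Algebra.trace F K1 (c' * v) * Algebra.trace F K2 (q2.a * w) = 0 := by
      intro w
      have hh := hx (v ⊗ₜ[F] w)
      rw [hdec, add_mul, Algebra.TensorProduct.tmul_mul_tmul,
        Algebra.TensorProduct.tmul_mul_tmul, one_mul, map_add, trace_tmul, trace_tmul] at hh
      exact hh
    set r := Algebra.trace F K1 (c * v) with hr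
    set s := Algebra.trace F K1 (c' * v) with hs
    have hu2 : ∀ w : K2, Algebra.trace F K2 ((r • (1 : K2) + s • q2.a) * w) = 0 := by
      intro w
      rw [add_mul, smul_mul_assoc, smul_mul_assoc, one_mul, map_add, map_smul, map_smul]
      have := h2 w
      simpa [smul_eq_mul] using this
    have h0 : r • (1 : K2) + s • q2.a = 0 := by
      apply q2.nd hd2
      · simpa using hu2 1
      · exact hu2 q2.a
    constructor
    · have e0 : q2.bas.repr (r • (1 : K2) + s • q2.a) 0 = 0 := by rw [h0]; simp
      rwa [q2.repr0] at e0
    · have e1 : q2.bas.repr (r • (1 : K2) + s • q2.a) 1 = 0 := by rw [h0]; simp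
      rwa [q2.repr1] at e1
  have hc : c = 0 := by
    apply q1.nd hd1
    · simpa using (key 1).1
    · exact (key q1.a).1
  have hc' : c' = 0 := by
    apply q1.nd hd1
    · simpa using (key 1).2
    · exact (key q1.a).2
  rw [hdec, hc, hc']
  simp

end Kside


section Bside
variable {F : Type u} [Field F] {B : Type u} [Ring B] [Algebra F B]

theorem iota_zero (ι : B → B) (hι_add : ∀ a b : B, ι (a + b) = ι a + ι b) : ι 0 = 0 := by
  have := hι_add 0 0
  rw [add_zero] at this
  exact (left_eq_add.mp this)

theorem iota_one (ι : B → B) (hι_alg : ∀ c : F, ι (algebraMap F B c) = algebraMap F B c) :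
    ι 1 = 1 := by
  have := hι_alg 1
  rwa [map_one] at this

theorem trd_spec (ι : B → B) (Nrd : B → F)
    (hι_add : ∀ a b : B, ι (a + b) = ι a + ι b)
    (hι_alg : ∀ c : F, ι (algebraMap F B c) = algebraMap F B c)
    (hNrd : ∀ b : B, algebraMap F B (Nrd b) = b * ι b) (z : B) :
    z + ι z = algebraMap F B (Nrd (z + 1) - Nrd z - 1) := by
  have h1 : ι (1 : B) = 1 := iota_one ι hι_alg
  have e : algebraMap F B (Nrd (z + 1)) = algebraMap F B (Nrd z) + (z + ι z) + 1 := by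
    rw [hNrd, hNrd, hι_add, h1]
    noncomm_ring
  rw [map_sub, map_sub, e, map_one]
  abel

theorem mul_iota_form (ι : B → B)
    (hι_mul : ∀ a b : B, ι (a * b) = ι b * ι a)
    (x y : B) (tx ty : F)
    (hx : ι x = algebraMap F B tx - x) (hy : ι y = algebraMap F B ty - y) :
    x * y + ι (x * y) =
      x * y + y * x + algebraMap F B (tx * ty)
        - algebraMap F B ty * x - algebraMap F B tx * y := by
  have key : (algebraMap F B ty - y) * (algebraMap F B tx - x) =
      algebraMap F B (tx * ty) - algebraMap F B ty * x - algebraMap F B tx * y + y * x := by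
    rw [sub_mul, mul_sub, mul_sub, ← Algebra.commutes tx y, ← map_mul, mul_comm ty tx]
    abel
  rw [hι_mul, hx, hy, key]
  abel

theorem iota_sym (ι : B → B) (Nrd : B → F)
    (hι_add : ∀ a b : B, ι (a + b) = ι a + ι b)
    (hι_mul : ∀ a b : B, ι (a * b) = ι b * ι a)
    (hι_alg : ∀ c : F, ι (algebraMap F B c) = algebraMap F B c)
    (hNrd : ∀ b : B, algebraMap F B (Nrd b) = b * ι b) (x y : B) :
    x * y + ι (x * y) = y * x + ι (y * x) := by
  have hx : ι x = algebraMap F B (Nrd (x + 1) - Nrd x - 1) - x := by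
    rw [← trd_spec ι Nrd hι_add hι_alg hNrd x]; abel
  have hy : ι y = algebraMap F B (Nrd (y + 1) - Nrd y - 1) - y := by
    rw [← trd_spec ι Nrd hι_add hι_alg hNrd y]; abel
  rw [mul_iota_form ι hι_mul x y _ _ hx hy, mul_iota_form ι hι_mul y x _ _ hy hx,
    mul_comm (Nrd (x + 1) - Nrd x - 1) (Nrd (y + 1) - Nrd y - 1)]
  abel

/-- Nondegeneracy of the trace pairing on a 4-dimensional central simple algebra
with standard involution. -/
theorem Bnd [Algebra.IsCentral F B] [IsSimpleRing B] (hB : Module.finrank F B = 4)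
    (ι : B → B) (Nrd : B → F)
    (hι_add : ∀ a b : B, ι (a + b) = ι a + ι b)
    (hι_mul : ∀ a b : B, ι (a * b) = ι b * ι a)
    (hι_alg : ∀ c : F, ι (algebraMap F B c) = algebraMap F B c)
    (hNrd : ∀ b : B, algebraMap F B (Nrd b) = b * ι b)
    (u : B) (hu : ∀ w : B, u * w + ι (u * w) = 0) : u = 0 := by
  have hnt : Nontrivial B := Module.nontrivial_of_finrank_pos (R := F) (by omega)
  have hι0 : ι 0 = 0 := iota_zero ι hι_add
  have hιneg : ∀ z : B, ι (-z) = -ι z := by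
    intro z
    have := hι_add z (-z)
    rw [add_neg_cancel, hι0] at this
    exact (neg_eq_of_add_eq_zero_right this.symm).symm
  set carrier : Set B := {v | ∀ w : B, v * w + ι (v * w) = 0} with hcar
  have zero_mem : (0 : B) ∈ carrier := fun w => by rw [zero_mul, hι0, add_zero]
  have add_mem : ∀ {x y : B}, x ∈ carrier → y ∈ carrier → x + y ∈ carrier := by
    intro x y hx hy w
    rw [add_mul, hι_add]
    calc x * w + y * w + (ι (x * w) + ι (y * w))
        = x * w + ι (x * w) + (y * w + ι (y * w)) := by abel
      _ = 0 := by rw [hx w, hy w, add_zero]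
  have neg_mem : ∀ {x : B}, x ∈ carrier → -x ∈ carrier := by
    intro x hx w
    rw [neg_mul, hιneg]
    calc -(x * w) + -ι (x * w) = -((x * w) + ι (x * w)) := by abel
      _ = 0 := by rw [hx w, neg_zero]
  have mul_mem_right : ∀ {x y : B}, x ∈ carrier → x * y ∈ carrier := by
    intro x y hx w
    rw [mul_assoc]
    exact hx (y * w)
  have mul_mem_left : ∀ {x y : B}, y ∈ carrier → x * y ∈ carrier := by
    intro x y hy w
    rw [mul_assoc]
    rw [iota_sym ι Nrd hι_add hι_mul hι_alg hNrd x (y * w)]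
    rw [mul_assoc]
    exact hy (w * x)
  set I : TwoSidedIdeal B := TwoSidedIdeal.mk' carrier zero_mem add_mem neg_mem
    mul_mem_left mul_mem_right with hI
  have hsimple : IsSimpleOrder (TwoSidedIdeal B) := IsSimpleRing.simple
  rcases hsimple.eq_bot_or_eq_top I with hbot | htop
  · have : u ∈ I := by rw [hI, TwoSidedIdeal.mem_mk']; exact hu
    rw [hbot, TwoSidedIdeal.mem_bot] at this
    exact this
  · exfalso
    have h1 : (1 : B) ∈ carrier := by
      have : (1 : B) ∈ I := by rw [htop]; exact TwoSidedIdeal.mem_top B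
      rwa [hI, TwoSidedIdeal.mem_mk'] at this
    have hw : ∀ w : B, w + ι w = 0 := by
      intro w
      have := h1 w
      rwa [one_mul] at this
    have hιw : ∀ w : B, ι w = -w := fun w => eq_neg_of_add_eq_zero_left (by rw [add_comm]; exact hw w)
    have h2 : (1 : B) + 1 = 0 := by
      have := hw 1
      rwa [iota_one ι hι_alg] at this
    have hzz : ∀ z : B, z + z = 0 := by
      intro z
      calc z + z = (1 + 1) * z := by rw [add_mul, one_mul]
        _ = 0 := by rw [h2, zero_mul]
    have hcomm : ∀ x y : B, x * y = y * x := by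
      intro x y
      have e1 : ι (x * y) = y * x := by
        rw [hι_mul, hιw, hιw, neg_mul_neg]
      have e2 : ι (x * y) = -(x * y) := hιw _
      have e3 : -(x * y) = x * y := neg_eq_of_add_eq_zero_left (hzz (x * y))
      rw [← e1, e2, e3]
    have hcen : (⊤ : Subalgebra F B) ≤ ⊥ := by
      refine le_trans ?_ Algebra.IsCentral.out
      intro x _
      rw [Subalgebra.mem_center_iff]
      intro g
      exact hcomm g x
    have hbt : (⊥ : Subalgebra F B) = ⊤ := le_antisymm bot_le hcen
    have := Subalgebra.bot_eq_top_iff_finrank_eq_one.mp hbt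
    rw [hB] at this
    omega

end Bside


set_option maxHeartbeats 4000000 in
set_option synthInstance.maxHeartbeats 400000 in
/-- In the setting of the invariant `ξ ∈ K3` attached to a quaternion
embedding `(B, α1, α2)` of a pair of quadratic étale `F`-algebras `(K1, K2)` (so that
`Nrd (α x) = Tr_{K3/F} (ξ * x * τ3 x)` for all `x ∈ K = K1 ⊗[F] K2`): the triple
`(B, α1, α2)` is regular, i.e. `α1(K1) ∪ α2(K2)` generates `B` as an `F`-algebra, if and
only if `ξ` is a unit in `K3`. -/
theorem stmt2 (F : Type u) [Field F]
    (K1 K2 : Type u) [CommRing K1] [CommRing K2] [Algebra F K1] [Algebra F K2]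
    [Algebra.Etale F K1] [Algebra.Etale F K2]
    (hK1 : Module.finrank F K1 = 2) (hK2 : Module.finrank F K2 = 2)
    (σ1 : K1 ≃ₐ[F] K1) (σ2 : K2 ≃ₐ[F] K2)
    (hσ1 : Function.Involutive σ1) (hσ2 : Function.Involutive σ2)
    (hσ1ne : σ1 ≠ AlgEquiv.refl) (hσ2ne : σ2 ≠ AlgEquiv.refl)
    (B : Type u) [Ring B] [Algebra F B]
    [Algebra.IsCentral F B] [IsSimpleRing B] (hB : Module.finrank F B = 4)
    (ι : B → B) (Nrd : B → F)
    (hι_add : ∀ a b : B, ι (a + b) = ι a + ι b)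
    (hι_mul : ∀ a b : B, ι (a * b) = ι b * ι a)
    (hι_inv : Function.Involutive ι)
    (hι_alg : ∀ c : F, ι (algebraMap F B c) = algebraMap F B c)
    (hNrd : ∀ b : B, algebraMap F B (Nrd b) = b * ι b)
    (α1 : K1 →ₐ[F] B) (α2 : K2 →ₐ[F] B)
    (hα1 : Function.Injective α1) (hα2 : Function.Injective α2)
    (α : K1 ⊗[F] K2 →ₗ[F] B)
    (hα : ∀ (x : K1) (y : K2), α (x ⊗ₜ[F] y) = α1 x * α2 y)
    (τ3 : (K1 ⊗[F] K2) ≃ₐ[F] (K1 ⊗[F] K2)) (hτ3 : τ3 = Algebra.TensorProduct.congr σ1 σ2)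
    (K3 : Subalgebra F (K1 ⊗[F] K2))
    (hK3 : K3 = AlgHom.equalizer (τ3 : (K1 ⊗[F] K2) →ₐ[F] (K1 ⊗[F] K2))
        (AlgHom.id F (K1 ⊗[F] K2)))
    -- `ξ` is the invariant of `(B, α1, α2)`
    (ξ : K3)
    (hξ : ∀ (x : K1 ⊗[F] K2) (h : (ξ : K1 ⊗[F] K2) * x * τ3 x ∈ K3),
        Nrd (α x) = Algebra.trace F K3 ⟨(ξ : K1 ⊗[F] K2) * x * τ3 x, h⟩) :
    Algebra.adjoin F (Set.range α1 ∪ Set.range α2) = ⊤ ↔ IsUnit ξ := by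
  classical
  haveI fdK1 : FiniteDimensional F K1 := Module.finite_of_finrank_pos (by rw [hK1]; norm_num)
  haveI fdK2 : FiniteDimensional F K2 := Module.finite_of_finrank_pos (by rw [hK2]; norm_num)
  haveI fdB : FiniteDimensional F B := Module.finite_of_finrank_pos (by rw [hB]; norm_num)
  haveI ntK1 : Nontrivial K1 := Module.nontrivial_of_finrank_pos (R := F) (by rw [hK1]; norm_num)
  haveI ntK2 : Nontrivial K2 := Module.nontrivial_of_finrank_pos (R := F) (by rw [hK2]; norm_num)
  haveI ntB : Nontrivial B := Module.nontrivial_of_finrank_pos (R := F) (by rw [hB]; norm_num)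
  obtain ⟨q1⟩ := qd_exists hK1 σ1 hσ1 hσ1ne
  obtain ⟨q2⟩ := qd_exists hK2 σ2 hσ2 hσ2ne
  have hd1 := q1.disc_ne
  have hd2 := q2.disc_ne
  have hτinv := tau_invol hσ1 hσ2 τ3 hτ3
  have hrkK : Module.finrank F (K1 ⊗[F] K2) = 4 := by
    rw [Module.finrank_tensorProduct, hK1, hK2]
  have hAinj : Function.Injective (algebraMap F B) := RingHom.injective _
  have hι0 : ι 0 = 0 := iota_zero ι hι_add
  have hfixK3 : ∀ s : K3, τ3 (s : K1 ⊗[F] K2) = (s : K1 ⊗[F] K2) := by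
    intro s
    have h2 : (s : K1 ⊗[F] K2) ∈ AlgHom.equalizer
        (τ3 : (K1 ⊗[F] K2) →ₐ[F] (K1 ⊗[F] K2)) (AlgHom.id F (K1 ⊗[F] K2)) := by
      rw [← hK3]; exact s.2
    exact h2
  have memQ : ∀ x : K1 ⊗[F] K2, (ξ : K1 ⊗[F] K2) * x * τ3 x ∈ K3 := by
    intro x
    have h : (ξ : K1 ⊗[F] K2) * x * τ3 x ∈ AlgHom.equalizer
        (τ3 : (K1 ⊗[F] K2) →ₐ[F] (K1 ⊗[F] K2)) (AlgHom.id F (K1 ⊗[F] K2)) := by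
      show τ3 ((ξ : K1 ⊗[F] K2) * x * τ3 x) = (ξ : K1 ⊗[F] K2) * x * τ3 x
      rw [map_mul, map_mul, hfixK3 ξ, hτinv]
      ring
    rw [← hK3] at h
    exact h
  have memP : ∀ x y : K1 ⊗[F] K2,
      (ξ : K1 ⊗[F] K2) * (x * τ3 y + y * τ3 x) ∈ K3 := by
    intro x y
    have h : (ξ : K1 ⊗[F] K2) * (x * τ3 y + y * τ3 x) ∈ AlgHom.equalizer
        (τ3 : (K1 ⊗[F] K2) →ₐ[F] (K1 ⊗[F] K2)) (AlgHom.id F (K1 ⊗[F] K2)) := by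
      show τ3 ((ξ : K1 ⊗[F] K2) * (x * τ3 y + y * τ3 x))
        = (ξ : K1 ⊗[F] K2) * (x * τ3 y + y * τ3 x)
      rw [map_mul, map_add, map_mul, map_mul, hfixK3 ξ, hτinv, hτinv]
      ring
    rw [← hK3] at h
    exact h
  have memP' : ∀ x y : K1 ⊗[F] K2, x * τ3 y + y * τ3 x ∈ K3 := by
    intro x y
    have h : x * τ3 y + y * τ3 x ∈ AlgHom.equalizer
        (τ3 : (K1 ⊗[F] K2) →ₐ[F] (K1 ⊗[F] K2)) (AlgHom.id F (K1 ⊗[F] K2)) := by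
      show τ3 (x * τ3 y + y * τ3 x) = x * τ3 y + y * τ3 x
      rw [map_add, map_mul, map_mul, hτinv, hτinv]
      ring
    rw [← hK3] at h
    exact h
  -- the polarization identity
  have polar : ∀ x y : K1 ⊗[F] K2,
      α x * ι (α y) + α y * ι (α x)
        = algebraMap F B (Algebra.trace F K3
            ⟨(ξ : K1 ⊗[F] K2) * (x * τ3 y + y * τ3 x), memP x y⟩) := by
    intro x y
    have n1 := hξ x (memQ x)
    have n2 := hξ y (memQ y)
    have n3 := hξ (x + y) (memQ (x + y))
    have hB3 : algebraMap F B (Nrd (α (x + y)))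
        = algebraMap F B (Nrd (α x)) + algebraMap F B (Nrd (α y))
          + (α x * ι (α y) + α y * ι (α x)) := by
      rw [hNrd, hNrd, hNrd, map_add α, hι_add]
      noncomm_ring
    have hsplit : (⟨(ξ : K1 ⊗[F] K2) * (x + y) * τ3 (x + y), memQ (x + y)⟩ : K3)
        = ⟨(ξ : K1 ⊗[F] K2) * x * τ3 x, memQ x⟩
          + ⟨(ξ : K1 ⊗[F] K2) * y * τ3 y, memQ y⟩
          + ⟨(ξ : K1 ⊗[F] K2) * (x * τ3 y + y * τ3 x), memP x y⟩ := by
      apply Subtype.ext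
      push_cast
      rw [map_add]
      ring
    have hKside : algebraMap F B (Nrd (α (x + y)))
        = algebraMap F B (Nrd (α x)) + algebraMap F B (Nrd (α y))
          + algebraMap F B (Algebra.trace F K3
              ⟨(ξ : K1 ⊗[F] K2) * (x * τ3 y + y * τ3 x), memP x y⟩) := by
      rw [n3, hsplit, map_add, map_add, map_add, map_add, ← n1, ← n2]
    exact add_left_cancel (hB3.symm.trans hKside)
  -- trace data on B
  have htrd : ∀ z : B, z + ι z = algebraMap F B (Nrd (z + 1) - Nrd z - 1) :=
    trd_spec ι Nrd hι_add hι_alg hNrd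
  have hιform : ∀ z : B, ι z = algebraMap F B (Nrd (z + 1) - Nrd z - 1) - z := by
    intro z
    rw [← htrd z]; abel
  -- the span of 1, α1 a, α2 b, products
  set A1 : B := α1 q1.a with hA1def
  set B2 : B := α2 q2.a with hB2def
  have hA2 : A1 * A1 = algebraMap F B q1.ta * A1 - algebraMap F B q1.na := by
    have h := congrArg α1 q1.hq
    rw [map_mul, map_sub, map_mul, AlgHom.commutes, AlgHom.commutes] at h
    exact h
  have hB2sq : B2 * B2 = algebraMap F B q2.ta * B2 - algebraMap F B q2.na := by
    have h := congrArg α2 q2.hq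
    rw [map_mul, map_sub, map_mul, AlgHom.commutes, AlgHom.commutes] at h
    exact h
  set S : Submodule F B := Submodule.span F {1, A1, B2, A1 * B2} with hSdef
  have h1S : (1 : B) ∈ S := Submodule.subset_span (by simp)
  have hA1S : A1 ∈ S := Submodule.subset_span (by simp)
  have hB2S : B2 ∈ S := Submodule.subset_span (by simp)
  have hABS : A1 * B2 ∈ S := Submodule.subset_span (by simp)
  have hsmulS : ∀ (c : F) (x : B), x ∈ S → algebraMap F B c * x ∈ S := by
    intro c x hx
    rw [← Algebra.smul_def]
    exact S.smul_mem c hx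
  have halgS : ∀ c : F, algebraMap F B c ∈ S := by
    intro c
    rw [← mul_one (algebraMap F B c)]
    exact hsmulS c 1 h1S
  have hrev : ∀ X Y : B, X ∈ S → Y ∈ S → X * Y ∈ S → Y * X ∈ S := by
    intro X Y hX hY hXY
    have h := mul_iota_form ι hι_mul X Y _ _ (hιform X) (hιform Y)
    have h' : X * Y + ι (X * Y) = X * Y + (Y * X
        + algebraMap F B ((Nrd (X + 1) - Nrd X - 1) * (Nrd (Y + 1) - Nrd Y - 1))
        - algebraMap F B (Nrd (Y + 1) - Nrd Y - 1) * X
        - algebraMap F B (Nrd (X + 1) - Nrd X - 1) * Y) := by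
      rw [h]; abel
    have hc := add_left_cancel h'
    have hYX : Y * X = ι (X * Y)
        - algebraMap F B ((Nrd (X + 1) - Nrd X - 1) * (Nrd (Y + 1) - Nrd Y - 1))
        + algebraMap F B (Nrd (Y + 1) - Nrd Y - 1) * X
        + algebraMap F B (Nrd (X + 1) - Nrd X - 1) * Y := by
      rw [hc]; abel
    rw [hYX, hιform (X * Y)]
    refine add_mem (add_mem (sub_mem (sub_mem (halgS _) hXY) (halgS _)) ?_) ?_
    · exact hsmulS _ _ hX
    · exact hsmulS _ _ hY
  have hBA : B2 * A1 ∈ S := hrev A1 B2 hA1S hB2S hABS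
  have hmulA1 : ∀ s ∈ S, A1 * s ∈ S := by
    intro s hs
    induction hs using Submodule.span_induction with
    | mem z hz =>
      simp only [Set.mem_insert_iff, Set.mem_singleton_iff] at hz
      rcases hz with rfl | rfl | rfl | rfl
      · rw [mul_one]; exact hA1S
      · rw [hA2]
        exact sub_mem (hsmulS _ _ hA1S) (halgS _)
      · exact hABS
      · rw [← mul_assoc, hA2, sub_mul]
        exact sub_mem (by rw [mul_assoc]; exact hsmulS _ _ hABS) (hsmulS _ _ hB2S)
    | zero => rw [mul_zero]; exact S.zero_mem
    | add y z _ _ hy hz => rw [mul_add]; exact add_mem hy hz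
    | smul c y _ hy => rw [mul_smul_comm]; exact S.smul_mem c hy
  have hmulB2r : ∀ s ∈ S, s * B2 ∈ S := by
    intro s hs
    induction hs using Submodule.span_induction with
    | mem z hz =>
      simp only [Set.mem_insert_iff, Set.mem_singleton_iff] at hz
      rcases hz with rfl | rfl | rfl | rfl
      · rw [one_mul]; exact hB2S
      · exact hABS
      · rw [hB2sq]
        exact sub_mem (hsmulS _ _ hB2S) (halgS _)
      · rw [mul_assoc, hB2sq, mul_sub]
        refine sub_mem ?_ ?_
        · rw [← mul_assoc, ← Algebra.commutes q2.ta (A1 : B), mul_assoc]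
          exact hsmulS _ _ hABS
        · rw [← Algebra.commutes q2.na (A1 : B)]
          exact hsmulS _ _ hA1S
    | zero => rw [zero_mul]; exact S.zero_mem
    | add y z _ _ hy hz => rw [add_mul]; exact add_mem hy hz
    | smul c y _ hy => rw [smul_mul_assoc]; exact S.smul_mem c hy
  have hmulB2l : ∀ s ∈ S, B2 * s ∈ S := by
    intro s hs
    induction hs using Submodule.span_induction with
    | mem z hz =>
      simp only [Set.mem_insert_iff, Set.mem_singleton_iff] at hz
      rcases hz with rfl | rfl | rfl | rfl
      · rw [mul_one]; exact hB2S
      · exact hBA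
      · rw [hB2sq]
        exact sub_mem (hsmulS _ _ hB2S) (halgS _)
      · rw [← mul_assoc]
        exact hmulB2r _ hBA
    | zero => rw [mul_zero]; exact S.zero_mem
    | add y z _ _ hy hz => rw [mul_add]; exact add_mem hy hz
    | smul c y _ hy => rw [mul_smul_comm]; exact S.smul_mem c hy
  have hmulS : ∀ x ∈ S, ∀ y ∈ S, x * y ∈ S := by
    intro x hx
    induction hx using Submodule.span_induction with
    | mem z hz =>
      simp only [Set.mem_insert_iff, Set.mem_singleton_iff] at hz
      rcases hz with rfl | rfl | rfl | rfl
      · intro y hy; rw [one_mul]; exact hy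
      · exact hmulA1
      · exact hmulB2l
      · intro y hy
        rw [mul_assoc]
        exact hmulA1 _ (hmulB2l y hy)
    | zero => intro y hy; rw [zero_mul]; exact S.zero_mem
    | add a b _ _ ha hb => intro y hy; rw [add_mul]; exact add_mem (ha y hy) (hb y hy)
    | smul c a _ ha => intro y hy; rw [smul_mul_assoc]; exact S.smul_mem c (ha y hy)
  set Salg : Subalgebra F B := S.toSubalgebra h1S (fun x y hx hy => hmulS x hx y hy) with hSalg
  have hadj_le : Algebra.adjoin F (Set.range ⇑α1 ∪ Set.range ⇑α2) ≤ Salg := by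
    apply Algebra.adjoin_le
    rintro z (⟨x, rfl⟩ | ⟨y, rfl⟩)
    · show α1 x ∈ S
      have hx := q1.coords x
      rw [hx, map_add, map_smul, map_smul, map_one]
      exact add_mem (S.smul_mem _ h1S) (S.smul_mem _ hA1S)
    · show α2 y ∈ S
      have hy := q2.coords y
      rw [hy, map_add, map_smul, map_smul, map_one]
      exact add_mem (S.smul_mem _ h1S) (S.smul_mem _ hB2S)
  have hS_le_range : S ≤ LinearMap.range α := by
    rw [hSdef, Submodule.span_le]
    rintro z hz
    simp only [Set.mem_insert_iff, Set.mem_singleton_iff] at hz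
    rcases hz with rfl | rfl | rfl | rfl
    · exact ⟨(1 : K1) ⊗ₜ[F] (1 : K2), by rw [hα, map_one, map_one, one_mul]⟩
    · exact ⟨q1.a ⊗ₜ[F] (1 : K2), by rw [hα, map_one, mul_one]⟩
    · exact ⟨(1 : K1) ⊗ₜ[F] q2.a, by rw [hα, map_one, one_mul]⟩
    · exact ⟨q1.a ⊗ₜ[F] q2.a, by rw [hα]⟩
  have hrange_le_adjoin : ∀ z : K1 ⊗[F] K2,
      α z ∈ Algebra.adjoin F (Set.range ⇑α1 ∪ Set.range ⇑α2) := by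
    intro z
    induction z using TensorProduct.induction_on with
    | zero => rw [map_zero]; exact Subalgebra.zero_mem _
    | tmul x y =>
      rw [hα]
      exact mul_mem (Algebra.subset_adjoin (Or.inl ⟨x, rfl⟩))
        (Algebra.subset_adjoin (Or.inr ⟨y, rfl⟩))
    | add z1 z2 h1 h2 => rw [map_add]; exact add_mem h1 h2
  have hsurj_of_adjoin : Algebra.adjoin F (Set.range ⇑α1 ∪ Set.range ⇑α2) = ⊤ →
      Function.Surjective α := by
    intro ht
    have htop : ∀ b : B, b ∈ S := by
      intro b
      have hb : b ∈ Algebra.adjoin F (Set.range ⇑α1 ∪ Set.range ⇑α2) := by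
        rw [ht]; exact Algebra.mem_top
      exact hadj_le hb
    intro b
    obtain ⟨z, hz⟩ := hS_le_range (htop b)
    exact ⟨z, hz⟩
  have hinj_iff : Function.Injective α ↔ Function.Surjective α :=
    LinearMap.injective_iff_surjective_of_finrank_eq_finrank (by rw [hrkK, hB])
  haveI fdK3 : FiniteDimensional F K3 := FiniteDimensional.finiteDimensional_submodule
    (Subalgebra.toSubmodule K3)
  constructor
  · -- regular → unit
    intro hreg
    by_contra hunit
    obtain ⟨η, hη0, hξη⟩ : ∃ η : K3, η ≠ 0 ∧ ξ * η = 0 := by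
      by_contra hcon
      push_neg at hcon
      apply hunit
      have hinj : Function.Injective (LinearMap.mulLeft F ξ : K3 →ₗ[F] K3) := by
        intro a b hab
        have h : ξ * (a - b) = 0 := by
          simp only [LinearMap.mulLeft_apply] at hab
          rw [mul_sub, hab, sub_self]
        by_contra hne
        exact hcon (a - b) (sub_ne_zero_of_ne fun hab2 => hne hab2) h
      have hsurj := (LinearMap.injective_iff_surjective).mp hinj
      obtain ⟨inv, hinv⟩ := hsurj 1
      simp only [LinearMap.mulLeft_apply] at hinv
      exact IsUnit.of_mul_eq_one inv hinv
    have hαsurj := hsurj_of_adjoin hreg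
    have hαinj := hinj_iff.mpr hαsurj
    have hτx : τ3 ((η : K3) : K1 ⊗[F] K2) = ((η : K3) : K1 ⊗[F] K2) := hfixK3 η
    have hpz : ∀ y : K1 ⊗[F] K2,
        (ξ : K1 ⊗[F] K2) * (((η : K3) : K1 ⊗[F] K2) * τ3 y
          + y * τ3 ((η : K3) : K1 ⊗[F] K2)) = 0 := by
      intro y
      rw [hτx]
      have hcoe : (ξ : K1 ⊗[F] K2) * ((η : K3) : K1 ⊗[F] K2)
          = ((ξ * η : K3) : K1 ⊗[F] K2) := by
        rw [MulMemClass.coe_mul]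
      calc (ξ : K1 ⊗[F] K2) * (((η : K3) : K1 ⊗[F] K2) * τ3 y
            + y * ((η : K3) : K1 ⊗[F] K2))
          = ((ξ : K1 ⊗[F] K2) * ((η : K3) : K1 ⊗[F] K2)) * (τ3 y + y) := by ring
        _ = 0 := by rw [hcoe, hξη, ZeroMemClass.coe_zero, zero_mul]
    have hzero : ∀ y : K1 ⊗[F] K2,
        α ((η : K3) : K1 ⊗[F] K2) * ι (α y) + α y * ι (α ((η : K3) : K1 ⊗[F] K2)) = 0 := by
      intro y
      rw [polar (((η : K3) : K1 ⊗[F] K2)) y]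
      have he : (⟨(ξ : K1 ⊗[F] K2) * (((η : K3) : K1 ⊗[F] K2) * τ3 y
          + y * τ3 ((η : K3) : K1 ⊗[F] K2)), memP _ y⟩ : K3) = 0 :=
        Subtype.ext (hpz y)
      rw [he, map_zero, map_zero]
    have hu : ∀ w : B, α ((η : K3) : K1 ⊗[F] K2) * w
        + ι (α ((η : K3) : K1 ⊗[F] K2) * w) = 0 := by
      intro w
      obtain ⟨y, hy⟩ := hαsurj (ι w)
      have h1 := hzero y
      rw [hy, hι_inv w] at h1
      rw [hι_mul]
      exact h1
    have hz := Bnd hB ι Nrd hι_add hι_mul hι_alg hNrd _ hu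
    have : ((η : K3) : K1 ⊗[F] K2) = 0 := hαinj (by rw [hz, map_zero])
    exact hη0 (Subtype.ext this)
  · -- unit → regular
    intro hunit
    obtain ⟨v, hv⟩ := hunit.exists_right_inv
    have hαinj : Function.Injective α := by
      have h0 : ∀ x : K1 ⊗[F] K2, α x = 0 → x = 0 := by
        intro x hx0
        have hTr : ∀ y : K1 ⊗[F] K2, Algebra.trace F K3
            ⟨(ξ : K1 ⊗[F] K2) * (x * τ3 y + y * τ3 x), memP x y⟩ = 0 := by
          intro y
          apply hAinj
          rw [map_zero, ← polar x y, hx0, zero_mul, hι0, mul_zero, add_zero]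
        have hξv : (ξ : K1 ⊗[F] K2) * ((v : K3) : K1 ⊗[F] K2) = 1 := by
          rw [← MulMemClass.coe_mul, hv, OneMemClass.coe_one]
        have hTr2 : ∀ w : K1 ⊗[F] K2, Algebra.trace F K3
            ⟨x * τ3 w + w * τ3 x, memP' x w⟩ = 0 := by
          intro w
          have h := hTr (((v : K3) : K1 ⊗[F] K2) * w)
          have he : (⟨(ξ : K1 ⊗[F] K2) * (x * τ3 (((v : K3) : K1 ⊗[F] K2) * w)
              + ((v : K3) : K1 ⊗[F] K2) * w * τ3 x), memP x _⟩ : K3)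
              = ⟨x * τ3 w + w * τ3 x, memP' x w⟩ := by
            apply Subtype.ext
            show (ξ : K1 ⊗[F] K2) * (x * τ3 (((v : K3) : K1 ⊗[F] K2) * w)
                + ((v : K3) : K1 ⊗[F] K2) * w * τ3 x) = x * τ3 w + w * τ3 x
            rw [map_mul, hfixK3 v]
            calc (ξ : K1 ⊗[F] K2) * (x * (((v : K3) : K1 ⊗[F] K2) * τ3 w)
                  + ((v : K3) : K1 ⊗[F] K2) * w * τ3 x)
                = ((ξ : K1 ⊗[F] K2) * ((v : K3) : K1 ⊗[F] K2))
                    * (x * τ3 w + w * τ3 x) := by ring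
              _ = x * τ3 w + w * τ3 x := by rw [hξv, one_mul]
          rw [he] at h
          exact h
        have hTrK : ∀ u : K1 ⊗[F] K2,
            Algebra.trace F (K1 ⊗[F] K2) (x * u) = 0 := by
          intro u
          have h := hTr2 (τ3 u)
          have hm : x * u + τ3 (x * u) ∈ K3 := by
            have h2 : x * u + τ3 (x * u) ∈ AlgHom.equalizer
                (τ3 : (K1 ⊗[F] K2) →ₐ[F] (K1 ⊗[F] K2)) (AlgHom.id F (K1 ⊗[F] K2)) := by
              show τ3 (x * u + τ3 (x * u)) = x * u + τ3 (x * u)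
              rw [map_add, hτinv]
              ring
            rw [← hK3] at h2
            exact h2
          have he : (⟨x * τ3 (τ3 u) + τ3 u * τ3 x, memP' x (τ3 u)⟩ : K3)
              = ⟨x * u + τ3 (x * u), hm⟩ := by
            apply Subtype.ext
            show x * τ3 (τ3 u) + τ3 u * τ3 x = x * u + τ3 (x * u)
            rw [hτinv u, map_mul]
            ring
          rw [he, trace_fix q1 q2 τ3 hτ3 hσ1 hσ2 K3 hK3 (x * u) hm] at h
          exact h
        exact Knd q1 q2 hd1 hd2 x hTrK
      exact LinearMap.ker_eq_bot.mp (LinearMap.ker_eq_bot'.mpr h0)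
    have hαsurj := hinj_iff.mp hαinj
    rw [eq_top_iff]
    intro b _
    obtain ⟨z, rfl⟩ := hαsurj b
    exact hrange_le_adjoin z
end

section
/- Let F be a field, A ⊂ M2(F) the diagonal subalgebra, and for γ = [[a,b],[c,d]] ∈ GL2(F), define inv(γ) = (ad/(ad−bc), −bc/(ad−bc)) ∈ F × F. Call γ regular if ad ≠ 0 and bc ≠ 0. Then inv induces a bijection from the set of regular double cosets in A^× \ GL2(F) / A^× to the set { (u,v) ∈ F^× × F^× : u + v = 1 }. -/
open Matrix

/-- A diagonal invertible matrix, i.e. an element of `A^×` where `A ⊆ M₂(F)` is the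
diagonal subalgebra. -/
def IsDiagUnit {F : Type*} [Field F] (t : Matrix (Fin 2) (Fin 2) F) : Prop :=
  (∃ e : Fin 2 → F, t = Matrix.diagonal e ∧ e 0 ≠ 0 ∧ e 1 ≠ 0)

/-- `γ` and `γ'` lie in the same double coset `A^× γ A^× = A^× γ' A^×`. -/
def SameDoubleCoset {F : Type*} [Field F] (γ γ' : Matrix (Fin 2) (Fin 2) F) : Prop :=
  ∃ t s : Matrix (Fin 2) (Fin 2) F, IsDiagUnit t ∧ IsDiagUnit s ∧ γ' = t * γ * s

/-- The invariant `inv(γ) = (ad/(ad − bc), −bc/(ad − bc))` of `γ = [[a,b],[c,d]]`. -/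
noncomputable def matInv {F : Type*} [Field F] (γ : Matrix (Fin 2) (Fin 2) F) : F × F :=
  (γ 0 0 * γ 1 1 / (γ 0 0 * γ 1 1 - γ 0 1 * γ 1 0),
   -(γ 0 1 * γ 1 0) / (γ 0 0 * γ 1 1 - γ 0 1 * γ 1 0))

/-- `γ = [[a,b],[c,d]]` is regular: `ad ≠ 0` and `bc ≠ 0`. -/
def MatRegular {F : Type*} [Field F] (γ : Matrix (Fin 2) (Fin 2) F) : Prop :=
  γ 0 0 * γ 1 1 ≠ 0 ∧ γ 0 1 * γ 1 0 ≠ 0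

lemma det_ne_aux {F : Type*} [Field F] (γ : Matrix (Fin 2) (Fin 2) F) (h : IsUnit γ.det) :
    γ 0 0 * γ 1 1 - γ 0 1 * γ 1 0 ≠ 0 := by
  rw [Matrix.det_fin_two] at h
  exact h.ne_zero

/-- For `γ ∈ GL₂(F)` regular (i.e. `ad ≠ 0` and `bc ≠ 0`), the invariant
`inv(γ) = (ad/(ad−bc), −bc/(ad−bc))` lies in `{(u,v) ∈ F^× × F^× : u + v = 1}`; two regular
elements of `GL₂(F)` have the same invariant iff they lie in the same double coset
`A^× \ GL₂(F) / A^×`; and every `(u,v)` with `u, v ≠ 0`, `u + v = 1` is the invariant of some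
regular `γ ∈ GL₂(F)`.  Thus `inv` induces a bijection from the set of regular double cosets
onto `{(u,v) ∈ F^× × F^× : u + v = 1}`. -/
theorem stmt3 (F : Type*) [Field F] :
    (∀ γ : Matrix (Fin 2) (Fin 2) F, IsUnit γ.det → MatRegular γ →
      (matInv γ).1 ≠ 0 ∧ (matInv γ).2 ≠ 0 ∧ (matInv γ).1 + (matInv γ).2 = 1) ∧
    (∀ γ γ' : Matrix (Fin 2) (Fin 2) F, IsUnit γ.det → IsUnit γ'.det →
      MatRegular γ → MatRegular γ' →
      (matInv γ = matInv γ' ↔ SameDoubleCoset γ γ')) ∧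
    (∀ u v : F, u ≠ 0 → v ≠ 0 → u + v = 1 →
      ∃ γ : Matrix (Fin 2) (Fin 2) F, IsUnit γ.det ∧ MatRegular γ ∧ matInv γ = (u, v)) := by

  refine ⟨?_, ?_, ?_⟩
  · intro γ hdet hreg
    have hD := det_ne_aux γ hdet
    refine ⟨div_ne_zero hreg.1 hD, div_ne_zero (neg_ne_zero.mpr hreg.2) hD, ?_⟩
    simp only [matInv]
    rw [← add_div, div_eq_one_iff_eq hD]
    ring
  · intro γ γ' hdet hdet' hreg hreg'
    have hD := det_ne_aux γ hdet
    have hD' := det_ne_aux γ' hdet'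
    obtain ⟨had, hbc⟩ := hreg
    obtain ⟨had', hbc'⟩ := hreg'
    have ha : γ 0 0 ≠ 0 := left_ne_zero_of_mul had
    have hd : γ 1 1 ≠ 0 := right_ne_zero_of_mul had
    have hb : γ 0 1 ≠ 0 := left_ne_zero_of_mul hbc
    have hc : γ 1 0 ≠ 0 := right_ne_zero_of_mul hbc
    have ha' : γ' 0 0 ≠ 0 := left_ne_zero_of_mul had'
    have hd' : γ' 1 1 ≠ 0 := right_ne_zero_of_mul had'
    have hb' : γ' 0 1 ≠ 0 := left_ne_zero_of_mul hbc'
    have hc' : γ' 1 0 ≠ 0 := right_ne_zero_of_mul hbc'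
    constructor
    · intro h
      rw [matInv, matInv, Prod.mk.injEq] at h
      obtain ⟨h1, h2⟩ := h
      rw [div_eq_div_iff hD hD'] at h1
      rw [div_eq_div_iff hD hD'] at h2
      have key : γ 0 0 * γ 1 1 * (γ' 0 1 * γ' 1 0)
          = γ 0 1 * γ 1 0 * (γ' 0 0 * γ' 1 1) := by
        have hz : (γ 0 0 * γ 1 1 * (γ' 0 1 * γ' 1 0)
            - γ 0 1 * γ 1 0 * (γ' 0 0 * γ' 1 1)) *
            (γ' 0 0 * γ' 1 1 - γ' 0 1 * γ' 1 0) = 0 := by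
          linear_combination (γ' 0 1 * γ' 1 0) * h1 + (γ' 0 0 * γ' 1 1) * h2
        rcases mul_eq_zero.mp hz with h | h
        · exact sub_eq_zero.mp h
        · exact absurd h hD'
      refine ⟨Matrix.diagonal ![1, γ' 1 0 * γ 0 0 / (γ 1 0 * γ' 0 0)],
        Matrix.diagonal ![γ' 0 0 / γ 0 0, γ' 0 1 / γ 0 1],
        ⟨_, rfl, by norm_num, by
          simp only [Matrix.cons_val_one, Matrix.head_cons]
          exact div_ne_zero (mul_ne_zero hc' ha) (mul_ne_zero hc ha')⟩,
        ⟨_, rfl, div_ne_zero ha' ha, div_ne_zero hb' hb⟩, ?_⟩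
      ext i j
      fin_cases i <;> fin_cases j
      · simp only [Matrix.mul_diagonal, Matrix.diagonal_mul]
        simp
        field_simp
      · simp only [Matrix.mul_diagonal, Matrix.diagonal_mul]
        simp
        field_simp
      · simp only [Matrix.mul_diagonal, Matrix.diagonal_mul]
        simp
        field_simp
      · simp only [Matrix.mul_diagonal, Matrix.diagonal_mul]
        simp
        field_simp
        linear_combination -key
    · rintro ⟨t, s, ⟨e, rfl, he0, he1⟩, ⟨f, rfl, hf0, hf1⟩, rfl⟩
      have hA : ∀ i j : Fin 2, (Matrix.diagonal e * γ * Matrix.diagonal f) i j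
          = e i * γ i j * f j := by
        intro i j
        simp [Matrix.mul_diagonal, Matrix.diagonal_mul]
      have hk : e 0 * e 1 * (f 0 * f 1) ≠ 0 :=
        mul_ne_zero (mul_ne_zero he0 he1) (mul_ne_zero hf0 hf1)
      rw [matInv, matInv, hA, hA, hA, hA, Prod.mk.injEq]
      constructor
      · rw [show e 0 * γ 0 0 * f 0 * (e 1 * γ 1 1 * f 1)
            = e 0 * e 1 * (f 0 * f 1) * (γ 0 0 * γ 1 1) from by ring,
          show e 0 * γ 0 1 * f 1 * (e 1 * γ 1 0 * f 0)
            = e 0 * e 1 * (f 0 * f 1) * (γ 0 1 * γ 1 0) from by ring,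
          ← mul_sub]
        exact (mul_div_mul_left _ _ hk).symm
      · rw [show -(e 0 * γ 0 1 * f 1 * (e 1 * γ 1 0 * f 0))
            = e 0 * e 1 * (f 0 * f 1) * -(γ 0 1 * γ 1 0) from by ring,
          show e 0 * γ 0 0 * f 0 * (e 1 * γ 1 1 * f 1)
            = e 0 * e 1 * (f 0 * f 1) * (γ 0 0 * γ 1 1) from by ring,
          show e 0 * γ 0 1 * f 1 * (e 1 * γ 1 0 * f 0)
            = e 0 * e 1 * (f 0 * f 1) * (γ 0 1 * γ 1 0) from by ring,
          ← mul_sub]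
        exact (mul_div_mul_left _ _ hk).symm
  · intro u v hu hv huv
    have hden : (1:F) * 1 - -v / u * 1 = 1/u := by
      field_simp
      linear_combination huv
    refine ⟨!![1, -v/u; 1, 1], ?_, ?_, ?_⟩
    · rw [Matrix.det_fin_two_of, isUnit_iff_ne_zero, hden]
      exact one_div_ne_zero hu
    · constructor
      · show (1:F) * 1 ≠ 0
        norm_num
      · show -v/u * 1 ≠ 0
        simp [div_ne_zero, hv, hu]
    · rw [matInv]
      have h1 : (!![1, -v/u; 1, 1] : Matrix (Fin 2) (Fin 2) F) 0 0 = 1 := rfl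
      have h2 : (!![1, -v/u; 1, 1] : Matrix (Fin 2) (Fin 2) F) 0 1 = -v/u := rfl
      have h3 : (!![1, -v/u; 1, 1] : Matrix (Fin 2) (Fin 2) F) 1 0 = 1 := rfl
      have h4 : (!![1, -v/u; 1, 1] : Matrix (Fin 2) (Fin 2) F) 1 1 = 1 := rfl
      rw [h1, h2, h3, h4, hden, Prod.mk.injEq]
      constructor
      · field_simp
      · field_simp
end

section
/- Let K1 and K2 be quadratic étale algebras over a field F, and K = K1 ⊗_F K2. Then K1 ≅ K2 as F-algebras if and only if the fixed algebra K3 of the automorphism τ3 = σ1 ⊗ σ2 of K is isomorphic to F ⊕ F. -/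
open scoped TensorProduct
open Module

universe u

section Stmt7Helpers

variable {F : Type u} [Field F]

lemma stmt7.nontrivial_of_notmem {K : Type u} [CommRing K] [Algebra F K] {ω : K}
    (hω : ω ∉ Set.range (algebraMap F K)) : Nontrivial K :=
  ⟨⟨ω, 0, fun h => hω ⟨0, by rw [map_zero, h]⟩⟩⟩

lemma stmt7.exists_basis {K : Type u} [CommRing K] [Algebra F K]
    (hK : finrank F K = 2) {ω : K} (hω : ω ∉ Set.range (algebraMap F K)) :
    ∃ b : Basis (Fin 2) F K, b 0 = 1 ∧ b 1 = ω := by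
  haveI := stmt7.nontrivial_of_notmem hω
  have hli : LinearIndependent F ![(1 : K), ω] := by
    rw [LinearIndependent.pair_iff]
    intro s t hst
    have ht : t = 0 := by
      by_contra ht
      refine hω ⟨-(t⁻¹ * s), ?_⟩
      have h1 : t • ω = -(s • (1 : K)) := by
        rw [eq_neg_iff_add_eq_zero, add_comm]; exact hst
      have : ω = (-(t⁻¹ * s)) • (1 : K) := by
        calc ω = (t⁻¹ * t) • ω := by rw [inv_mul_cancel₀ ht, one_smul]
          _ = t⁻¹ • (t • ω) := by rw [mul_smul]
          _ = t⁻¹ • (-(s • (1 : K))) := by rw [h1]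
          _ = (-(t⁻¹ * s)) • (1 : K) := by rw [smul_neg, smul_smul, neg_smul]
      rw [this, Algebra.algebraMap_eq_smul_one]
    subst ht
    refine ⟨?_, rfl⟩
    have hs : algebraMap F K s = 0 := by
      rw [Algebra.algebraMap_eq_smul_one]
      simpa using hst
    exact (algebraMap F K).injective (by rw [map_zero]; exact hs)
  refine ⟨basisOfLinearIndependentOfCardEqFinrank hli (by simp [hK]), ?_, ?_⟩ <;>
    simp [coe_basisOfLinearIndependentOfCardEqFinrank]

lemma stmt7.coords {K : Type u} [CommRing K] [Algebra F K]
    (hK : finrank F K = 2) {ω : K} (hω : ω ∉ Set.range (algebraMap F K)) (z : K) :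
    ∃ a t : F, z = algebraMap F K a + algebraMap F K t * ω := by
  obtain ⟨b, hb0, hb1⟩ := stmt7.exists_basis hK hω
  have hsum := b.sum_repr z
  rw [Fin.sum_univ_two, hb0, hb1] at hsum
  rw [Algebra.smul_def, Algebra.smul_def, mul_one] at hsum
  exact ⟨b.repr z 0, b.repr z 1, hsum.symm⟩

lemma stmt7.coords_unique {K : Type u} [CommRing K] [Algebra F K]
    {ω : K} (hω : ω ∉ Set.range (algebraMap F K)) (a t : F)
    (h : algebraMap F K a + algebraMap F K t * ω = 0) : a = 0 ∧ t = 0 := by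
  haveI := stmt7.nontrivial_of_notmem hω
  have ht : t = 0 := by
    by_contra ht
    refine hω ⟨-(t⁻¹ * a), ?_⟩
    have h1 : algebraMap F K t * ω = -(algebraMap F K a) := by
      rw [eq_neg_iff_add_eq_zero, add_comm]; exact h
    calc algebraMap F K (-(t⁻¹ * a)) = algebraMap F K t⁻¹ * -(algebraMap F K a) := by
          rw [map_neg, map_mul, mul_neg]
      _ = algebraMap F K t⁻¹ * (algebraMap F K t * ω) := by rw [h1]
      _ = algebraMap F K (t⁻¹ * t) * ω := by rw [map_mul, mul_assoc]
      _ = ω := by rw [inv_mul_cancel₀ ht, map_one, one_mul]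
  refine ⟨?_, ht⟩
  rw [ht, map_zero, zero_mul, add_zero] at h
  exact (algebraMap F K).injective (by rw [map_zero]; exact h)

end Stmt7Helpers
section Stmt7Quad

variable {F : Type u} [Field F]

lemma stmt7.quadRel {K : Type u} [CommRing K] [Algebra F K] (hK : finrank F K = 2)
    (σ : K ≃ₐ[F] K) (hσ : Function.Involutive σ)
    (hfix : AlgHom.equalizer (σ : K →ₐ[F] K) (AlgHom.id F K) = ⊥) :
    ∃ (ω : K) (u v : F), ω ∉ Set.range (algebraMap F K) ∧
      ω ^ 2 = algebraMap F K u * ω - algebraMap F K v ∧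
      σ ω = algebraMap F K u - ω ∧
      ((2 : F) = 0 → u ≠ 0) ∧ (IsReduced K → u ^ 2 - 4 * v ≠ 0) := by
  haveI : FiniteDimensional F K := FiniteDimensional.of_finrank_pos (by rw [hK]; norm_num)
  obtain ⟨ω, hω⟩ : ∃ ω : K, ω ∉ Set.range (algebraMap F K) := by
    by_contra hc
    push_neg at hc
    have hle : (⊤ : Submodule F K) ≤ Submodule.span F ({1} : Set K) := by
      intro z _
      obtain ⟨a, ha⟩ := hc z
      rw [← ha, Algebra.algebraMap_eq_smul_one]
      exact Submodule.smul_mem _ _ (Submodule.mem_span_singleton_self 1)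
    have h2 := Submodule.finrank_mono hle
    have h3 : finrank F ↥(Submodule.span F ({1} : Set K)) ≤ 1 := by
      have h := finrank_span_finset_le_card (R := F) ({1} : Finset K)
      rw [Finset.coe_singleton, Finset.card_singleton] at h
      exact h
    rw [finrank_top] at h2
    omega
  have hfixcontra : σ ω = ω → False := by
    intro hm
    refine hω ?_
    rw [← Algebra.mem_bot (R := F), ← hfix]
    exact hm
  obtain ⟨a0, t0, hxy⟩ := stmt7.coords hK hω (ω ^ 2)
  have hsq : ω ^ 2 = algebraMap F K t0 * ω - algebraMap F K (-a0) := by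
    rw [map_neg, hxy]; ring
  -- the involution sends ω to (trace) - ω
  have hmem : σ ω + ω ∈ AlgHom.equalizer (σ : K →ₐ[F] K) (AlgHom.id F K) := by
    rw [AlgHom.mem_equalizer]
    show σ (σ ω + ω) = σ ω + ω
    rw [map_add, hσ ω, add_comm]
  rw [hfix, Algebra.mem_bot] at hmem
  obtain ⟨s, hs⟩ := hmem
  have hσω : σ ω = algebraMap F K s - ω := by rw [hs]; ring
  have hEq : (σ ω) ^ 2 = algebraMap F K t0 * (σ ω) - algebraMap F K (-a0) := by
    rw [← map_pow, hsq, map_sub, map_mul, AlgEquiv.commutes, AlgEquiv.commutes]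
  rw [hσω] at hEq
  have key : algebraMap F K (s ^ 2 - t0 * s) + algebraMap F K (2 * t0 - 2 * s) * ω = 0 := by
    simp only [map_sub, map_mul, map_pow, map_neg, map_ofNat]
    linear_combination hEq - hsq
  obtain ⟨e1, e2⟩ := stmt7.coords_unique hω _ _ key
  -- if char 2 then -ω = ω
  have hneg : (2 : F) = 0 → -ω = ω := by
    intro h20
    have h2s : ((2 : F)) • ω = 0 := by rw [h20, zero_smul]
    rw [two_smul] at h2s
    exact neg_eq_of_add_eq_zero_left h2s
  have hsy : s = t0 := by
    by_cases hsy : s = t0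
    · exact hsy
    exfalso
    have h20 : (2 : F) = 0 := by
      have h : (2 : F) * (t0 - s) = 0 := by linear_combination e2
      rcases mul_eq_zero.mp h with h | h
      · exact h
      · exact ((hsy (sub_eq_zero.mp h).symm)).elim
    have hs0 : s = 0 := by
      have h : s * (s - t0) = 0 := by linear_combination e1
      rcases mul_eq_zero.mp h with h | h
      · exact h
      · exact (False.elim (hsy (sub_eq_zero.mp h)))
    refine hfixcontra ?_
    rw [hσω, hs0, map_zero, zero_sub]
    exact hneg h20
  rw [hsy] at hσω
  have hchar2 : (2 : F) = 0 → t0 ≠ 0 := by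
    intro h20 ht00
    refine hfixcontra ?_
    rw [hσω, ht00, map_zero, zero_sub]
    exact hneg h20
  refine ⟨ω, t0, -a0, hω, hsq, hσω, hchar2, ?_⟩
  intro hred hcon
  by_cases h20 : (2 : F) = 0
  · refine hchar2 h20 ?_
    have hsq0 : t0 ^ 2 = 0 := by linear_combination hcon + (2 * (-a0)) * h20
    exact pow_eq_zero_iff (n := 2) (by norm_num) |>.mp hsq0
  · have h2K : ((2 : K)) = algebraMap F K 2 := by rw [map_ofNat]
    have hw2 : (2 * ω - algebraMap F K t0) ^ 2 = 0 := by
      have hsq' := hsq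
      simp only [map_neg] at hsq'
      have h : (2 * ω - algebraMap F K t0) ^ 2 = algebraMap F K (t0 ^ 2 - 4 * (-a0)) := by
        simp only [map_sub, map_mul, map_pow, map_neg, map_ofNat]
        linear_combination (4 : K) * hsq'
      rw [h, hcon, map_zero]
    have hw0 : 2 * ω - algebraMap F K t0 = 0 :=
      (IsNilpotent.eq_zero (⟨2, hw2⟩ : IsNilpotent _))
    refine hω ⟨2⁻¹ * t0, ?_⟩
    have h2ω : 2 * ω = algebraMap F K t0 := by
      rw [← sub_eq_zero]; exact hw0
    calc algebraMap F K (2⁻¹ * t0) = algebraMap F K 2⁻¹ * algebraMap F K t0 := by rw [map_mul]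
      _ = algebraMap F K 2⁻¹ * (2 * ω) := by rw [h2ω]
      _ = (algebraMap F K 2⁻¹ * algebraMap F K 2) * ω := by rw [h2K, mul_assoc]
      _ = ω := by rw [← map_mul, inv_mul_cancel₀ h20, map_one, one_mul]

end Stmt7Quad
section Stmt7Iso

variable {F : Type u} [Field F]

lemma stmt7.iso_iff {K K' : Type u} [CommRing K] [Algebra F K] [CommRing K'] [Algebra F K']
    (hK : finrank F K = 2) (hK' : finrank F K' = 2)
    {ω : K} (hω : ω ∉ Set.range (algebraMap F K)) {u v : F}
    (hq : ω ^ 2 = algebraMap F K u * ω - algebraMap F K v)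
    {ω' : K'} (hω' : ω' ∉ Set.range (algebraMap F K')) {p q : F}
    (hq' : ω' ^ 2 = algebraMap F K' p * ω' - algebraMap F K' q) :
    Nonempty (K ≃ₐ[F] K') ↔
      ∃ c d : F, d ≠ 0 ∧ 2 * c + d * p = u ∧ c ^ 2 - d ^ 2 * q = u * c - v := by
  constructor
  · rintro ⟨φ⟩
    obtain ⟨c, d, hrep⟩ := stmt7.coords hK' hω' (φ ω)
    have hd : d ≠ 0 := by
      rintro rfl
      rw [map_zero, zero_mul, add_zero] at hrep
      refine hω ⟨c, ?_⟩
      have : φ.symm (φ ω) = φ.symm (algebraMap F K' c) := by rw [hrep]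
      rw [AlgEquiv.symm_apply_apply, AlgEquiv.commutes] at this
      exact this.symm
    have hq2 : (φ ω) ^ 2 = algebraMap F K' u * (φ ω) - algebraMap F K' v := by
      rw [← map_pow, hq, map_sub, map_mul, AlgEquiv.commutes, AlgEquiv.commutes]
    rw [hrep] at hq2
    have key : algebraMap F K' (c ^ 2 - d ^ 2 * q - u * c + v) +
        algebraMap F K' (2 * c * d + d ^ 2 * p - u * d) * ω' = 0 := by
      simp only [map_sub, map_mul, map_pow, map_add, map_ofNat]
      linear_combination hq2 - (algebraMap F K' d) ^ 2 * hq'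
    obtain ⟨k1, k2⟩ := stmt7.coords_unique hω' _ _ key
    refine ⟨c, d, hd, ?_, ?_⟩
    · have h : d * (2 * c + d * p - u) = 0 := by linear_combination k2
      rcases mul_eq_zero.mp h with h | h
      · exact (hd h).elim
      · linear_combination h
    · linear_combination k1
  · rintro ⟨c, d, hd, h1, h2⟩
    haveI : FiniteDimensional F K' := FiniteDimensional.of_finrank_pos (by rw [hK']; norm_num)
    haveI : FiniteDimensional F K := FiniteDimensional.of_finrank_pos (by rw [hK]; norm_num)
    obtain ⟨b, hb0, hb1⟩ := stmt7.exists_basis hK hω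
    set γ : K' := algebraMap F K' c + algebraMap F K' d * ω' with hγdef
    have hγq : γ ^ 2 = algebraMap F K' u * γ - algebraMap F K' v := by
      have e1 : algebraMap F K' (2 * c * d + d ^ 2 * p - u * d) = 0 := by
        have : 2 * c * d + d ^ 2 * p - u * d = 0 := by linear_combination d * h1
        rw [this, map_zero]
      have e2 : algebraMap F K' (c ^ 2 - d ^ 2 * q - u * c + v) = 0 := by
        have : c ^ 2 - d ^ 2 * q - u * c + v = 0 := by linear_combination h2
        rw [this, map_zero]
      simp only [map_sub, map_mul, map_pow, map_add, map_ofNat] at e1 e2 ⊢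
      linear_combination (algebraMap F K' d) ^ 2 * hq' + ω' * e1 + e2
    let f0 : K →ₗ[F] K' := b.constr F ![1, γ]
    have hf1 : f0 1 = 1 := by
      have := b.constr_basis F ![1, γ] 0
      rwa [hb0] at this
    have hfω : f0 ω = γ := by
      have := b.constr_basis F ![1, γ] 1
      rwa [hb1] at this
    have hfM : ∀ a : F, f0 (algebraMap F K a) = algebraMap F K' a := by
      intro a
      rw [Algebra.algebraMap_eq_smul_one, map_smul, hf1, Algebra.algebraMap_eq_smul_one]
    have hfcomb : ∀ a t : F, f0 (algebraMap F K a + algebraMap F K t * ω) =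
        algebraMap F K' a + algebraMap F K' t * γ := by
      intro a t
      rw [map_add, hfM, ← Algebra.smul_def, map_smul, hfω, Algebra.smul_def]
    have hmul : ∀ x y, f0 (x * y) = f0 x * f0 y := by
      intro x y
      obtain ⟨a1, t1, rfl⟩ := stmt7.coords hK hω x
      obtain ⟨a2, t2, rfl⟩ := stmt7.coords hK hω y
      have hx : (algebraMap F K a1 + algebraMap F K t1 * ω) *
          (algebraMap F K a2 + algebraMap F K t2 * ω) =
          algebraMap F K (a1 * a2 - t1 * t2 * v) +
          algebraMap F K (a1 * t2 + a2 * t1 + t1 * t2 * u) * ω := by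
        simp only [map_sub, map_mul, map_pow, map_add]
        linear_combination (algebraMap F K t1 * algebraMap F K t2) * hq
      rw [hx, hfcomb, hfcomb, hfcomb]
      simp only [map_sub, map_mul, map_pow, map_add]
      linear_combination (-(algebraMap F K' t1 * algebraMap F K' t2)) * hγq
    let f : K →ₐ[F] K' := AlgHom.ofLinearMap f0 hf1 hmul
    have hinj : Function.Injective f := by
      rw [injective_iff_map_eq_zero]
      intro z hz
      obtain ⟨a, t, rfl⟩ := stmt7.coords hK hω z
      have hz' : algebraMap F K' a + algebraMap F K' t * γ = 0 := by
        rw [← hfcomb]; exact hz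
      have hz'' : algebraMap F K' (a + t * c) + algebraMap F K' (t * d) * ω' = 0 := by
        simp only [map_add, map_mul]
        linear_combination hz'
      obtain ⟨hz1, hz2⟩ := stmt7.coords_unique hω' _ _ hz''
      have ht : t = 0 := by
        rcases mul_eq_zero.mp hz2 with h | h
        · exact h
        · exact (hd h).elim
      subst ht
      have ha : a = 0 := by linear_combination hz1
      subst ha
      simp
    have hsurj : Function.Surjective f := by
      have hker : LinearMap.ker f.toLinearMap = ⊥ := LinearMap.ker_eq_bot.mpr hinj
      have hr := LinearMap.finrank_range_add_finrank_ker f.toLinearMap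
      rw [hker, finrank_bot, hK, add_zero] at hr
      have htop : LinearMap.range f.toLinearMap = ⊤ :=
        Submodule.eq_top_of_finrank_eq (by rw [hr, hK'])
      intro y
      obtain ⟨x, hx⟩ := LinearMap.range_eq_top.mp htop y
      exact ⟨x, hx⟩
    exact ⟨AlgEquiv.ofBijective f ⟨hinj, hsurj⟩⟩

end Stmt7Iso
section Stmt7Arith

variable {F : Type u} [Field F]

lemma stmt7.arith (u v p q : F) (hD1 : u ^ 2 - 4 * v ≠ 0) (hD2 : p ^ 2 - 4 * q ≠ 0)
    (hchar : (2 : F) = 0 → u ≠ 0 ∧ p ≠ 0) :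
    (∃ c d : F, d ≠ 0 ∧ 2 * c + d * p = u ∧ c ^ 2 - d ^ 2 * q = u * c - v) ↔
    (∃ c d : F, d ≠ 0 ∧ 2 * c + d * 1 = -(u * p) ∧
      c ^ 2 - d ^ 2 * 0 = -(u * p) * c - (u ^ 2 * q + p ^ 2 * v - 4 * (v * q))) := by
  by_cases h20 : (2 : F) = 0
  · obtain ⟨hu, hp⟩ := hchar h20
    constructor
    · rintro ⟨c, d, hd, h1, h2⟩
      refine ⟨p * c, -(u * p) - 2 * (p * c), ?_, by ring, ?_⟩
      · have he : -(u * p) - 2 * (p * c) = -(u * p) := by linear_combination (-(p * c)) * h20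
        rw [he]
        exact neg_ne_zero.mpr (mul_ne_zero hu hp)
      · linear_combination p ^ 2 * h2 + (q * (2 * c + d * p + u)) * h1 +
          (u * p ^ 2 * c + u ^ 2 * q - 2 * v * q - 2 * q * c ^ 2 - 2 * q * c * d * p) * h20
    · rintro ⟨c, d, hd, h1, h2⟩
      refine ⟨c / p, u / p, div_ne_zero hu hp, ?_, ?_⟩
      · field_simp
        linear_combination c * h20
      · field_simp
        linear_combination h2 + (-(u * p * c) - u ^ 2 * q + 2 * (v * q)) * h20
  · constructor
    · rintro ⟨c, d, hd, h1, h2⟩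
      have hDD : u ^ 2 - 4 * v = d ^ 2 * (p ^ 2 - 4 * q) := by
        linear_combination (2 * c - d * p - u) * h1 - 4 * h2
      refine ⟨(d * (p ^ 2 - 4 * q) - u * p) / 2, -(d * (p ^ 2 - 4 * q)),
        neg_ne_zero.mpr (mul_ne_zero hd hD2), ?_, ?_⟩
      · field_simp
        ring
      · field_simp
        linear_combination (-(p ^ 2 - 4 * q)) * hDD
    · rintro ⟨c, d, hd, h1, h2⟩
      have hdd : d ^ 2 = (u ^ 2 - 4 * v) * (p ^ 2 - 4 * q) := by
        linear_combination (d - u * p - 2 * c) * h1 + 4 * h2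
      refine ⟨(u - (d / (p ^ 2 - 4 * q)) * p) / 2, d / (p ^ 2 - 4 * q),
        div_ne_zero hd hD2, ?_, ?_⟩
      · field_simp
        ring
      · field_simp
        linear_combination (p ^ 2 - 4 * q) * hdd

end Stmt7Arith
section Stmt7Tensor

variable {F : Type u} [Field F]

lemma stmt7.tensor_indep {K1 K2 : Type u} [CommRing K1] [CommRing K2]
    [Algebra F K1] [Algebra F K2]
    (hK1 : finrank F K1 = 2) (hK2 : finrank F K2 = 2)
    {α : K1} (hα : α ∉ Set.range (algebraMap F K1))
    {β : K2} (hβ : β ∉ Set.range (algebraMap F K2))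
    (x00 x10 x01 x11 : F)
    (h : algebraMap F (K1 ⊗[F] K2) x00
        + algebraMap F (K1 ⊗[F] K2) x10 * (α ⊗ₜ 1)
        + algebraMap F (K1 ⊗[F] K2) x01 * ((1 : K1) ⊗ₜ β)
        + algebraMap F (K1 ⊗[F] K2) x11 * (α ⊗ₜ β) = 0) :
    x00 = 0 ∧ x10 = 0 ∧ x01 = 0 ∧ x11 = 0 := by
  obtain ⟨b1, hb10, hb11⟩ := stmt7.exists_basis hK1 hα
  obtain ⟨b2, hb20, hb21⟩ := stmt7.exists_basis hK2 hβ
  let b := Basis.tensorProduct b1 b2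
  have hli := b.linearIndependent
  rw [Fintype.linearIndependent_iff] at hli
  have h' := hli (fun ij => !![x00, x01; x10, x11] ij.1 ij.2) ?_
  · exact ⟨by simpa using h' (0, 0), by simpa using h' (1, 0),
      by simpa using h' (0, 1), by simpa using h' (1, 1)⟩
  · rw [Fintype.sum_prod_type]
    simp only [b, Fin.sum_univ_two, Basis.tensorProduct_apply, hb10, hb11, hb20, hb21]
    have hone : (1 : K1) ⊗ₜ[F] (1 : K2) = (1 : K1 ⊗[F] K2) := rfl
    simp only [Matrix.cons_val', Matrix.cons_val_zero, Matrix.cons_val_one, Matrix.head_cons,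
      Matrix.empty_val', Matrix.cons_val_fin_one, Matrix.head_fin_const, Matrix.of_apply,
      hone, Algebra.smul_def, mul_one]
    linear_combination h

end Stmt7Tensor
set_option maxHeartbeats 1600000 in
/-- Let `K1`, `K2` be quadratic étale algebras over a field `F`, with
nontrivial automorphisms `σ1`, `σ2` (each an involution whose fixed subalgebra is `F`), and
let `K = K1 ⊗[F] K2` with the automorphism `τ3 = σ1 ⊗ σ2` and fixed subalgebra `K3`.
Then `K1 ≅ K2` as `F`-algebras if and only if `K3 ≅ F ⊕ F`. -/
theorem stmt7 (F : Type u) [Field F]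
    (K1 K2 : Type u) [CommRing K1] [CommRing K2] [Algebra F K1] [Algebra F K2]
    [Algebra.Etale F K1] [Algebra.Etale F K2]
    (hK1 : Module.finrank F K1 = 2) (hK2 : Module.finrank F K2 = 2)
    (σ1 : K1 ≃ₐ[F] K1) (σ2 : K2 ≃ₐ[F] K2)
    (hσ1 : Function.Involutive σ1) (hσ2 : Function.Involutive σ2)
    -- the fixed subalgebra of each `σᵢ` is `F` (so `σᵢ` is the nontrivial automorphism)
    (hfix1 : AlgHom.equalizer (σ1 : K1 →ₐ[F] K1) (AlgHom.id F K1) = ⊥)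
    (hfix2 : AlgHom.equalizer (σ2 : K2 →ₐ[F] K2) (AlgHom.id F K2) = ⊥) :
    letI τ3 : (K1 ⊗[F] K2) ≃ₐ[F] (K1 ⊗[F] K2) := Algebra.TensorProduct.congr σ1 σ2
    letI K3 : Subalgebra F (K1 ⊗[F] K2) :=
      AlgHom.equalizer (τ3 : (K1 ⊗[F] K2) →ₐ[F] (K1 ⊗[F] K2)) (AlgHom.id F (K1 ⊗[F] K2))
    (Nonempty (K1 ≃ₐ[F] K2) ↔ Nonempty (K3 ≃ₐ[F] (F × F))) := by
  set τ3 : (K1 ⊗[F] K2) ≃ₐ[F] (K1 ⊗[F] K2) := Algebra.TensorProduct.congr σ1 σ2 with hτ3def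
  set K3 : Subalgebra F (K1 ⊗[F] K2) :=
    AlgHom.equalizer (τ3 : (K1 ⊗[F] K2) →ₐ[F] (K1 ⊗[F] K2)) (AlgHom.id F (K1 ⊗[F] K2))
    with hK3def
  obtain ⟨α, u, v, hα, hαsq, hσα, hu2, hured⟩ := stmt7.quadRel hK1 σ1 hσ1 hfix1
  obtain ⟨β, p, q, hβ, hβsq, hσβ, hp2, hqred⟩ := stmt7.quadRel hK2 σ2 hσ2 hfix2
  have hred1 : IsReduced K1 := Algebra.FormallyUnramified.isReduced_of_field F K1
  have hred2 : IsReduced K2 := Algebra.FormallyUnramified.isReduced_of_field F K2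
  have hD1 := hured hred1
  have hD2 := hqred hred2
  haveI : FiniteDimensional F K1 := FiniteDimensional.of_finrank_pos (by rw [hK1]; norm_num)
  haveI : FiniteDimensional F K2 := FiniteDimensional.of_finrank_pos (by rw [hK2]; norm_num)
  have hMl : ∀ r : F, algebraMap F (K1 ⊗[F] K2) r = (algebraMap F K1 r) ⊗ₜ (1 : K2) :=
    fun r => rfl
  have hMr : ∀ r : F, algebraMap F (K1 ⊗[F] K2) r = (1 : K1) ⊗ₜ (algebraMap F K2 r) :=
    fun r => Algebra.TensorProduct.algebraMap_apply' r
  -- the basic tensors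
  set A : K1 ⊗[F] K2 := α ⊗ₜ 1 with hAdef
  set B : K1 ⊗[F] K2 := (1 : K1) ⊗ₜ β with hBdef
  have hAB : A * B = α ⊗ₜ β := by
    rw [hAdef, hBdef, Algebra.TensorProduct.tmul_mul_tmul, mul_one, one_mul]
  have hA2 : A ^ 2 = algebraMap F (K1 ⊗[F] K2) u * A - algebraMap F (K1 ⊗[F] K2) v := by
    rw [hAdef, pow_two, Algebra.TensorProduct.tmul_mul_tmul, mul_one, ← pow_two, hαsq,
      hMl u, hMl v, Algebra.TensorProduct.tmul_mul_tmul, mul_one, TensorProduct.sub_tmul]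
  have hB2 : B ^ 2 = algebraMap F (K1 ⊗[F] K2) p * B - algebraMap F (K1 ⊗[F] K2) q := by
    rw [hBdef, pow_two, Algebra.TensorProduct.tmul_mul_tmul, mul_one, ← pow_two, hβsq,
      hMr p, hMr q, Algebra.TensorProduct.tmul_mul_tmul, mul_one, TensorProduct.tmul_sub]
  have hτA : τ3 A = algebraMap F (K1 ⊗[F] K2) u - A := by
    show (Algebra.TensorProduct.congr σ1 σ2) A = _
    rw [hAdef, Algebra.TensorProduct.congr_apply, Algebra.TensorProduct.map_tmul]
    change σ1 α ⊗ₜ[F] σ2 (1 : K2) = _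
    rw [map_one, hσα, hMl u, TensorProduct.sub_tmul]
  have hτB : τ3 B = algebraMap F (K1 ⊗[F] K2) p - B := by
    show (Algebra.TensorProduct.congr σ1 σ2) B = _
    rw [hBdef, Algebra.TensorProduct.congr_apply, Algebra.TensorProduct.map_tmul]
    change σ1 (1 : K1) ⊗ₜ[F] σ2 β = _
    rw [map_one, hσβ, hMr p, TensorProduct.tmul_sub]
  -- the generator of K3
  set γ : K1 ⊗[F] K2 :=
    2 * (A * B) - algebraMap F (K1 ⊗[F] K2) p * A - algebraMap F (K1 ⊗[F] K2) u * B with hγdef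
  have hγfix : τ3 γ = γ := by
    simp only [hγdef, map_sub, map_mul, map_ofNat, AlgEquiv.commutes, hτA, hτB]
    ring
  have hγK3 : γ ∈ K3 := hγfix
  have hγsq : γ ^ 2 = algebraMap F (K1 ⊗[F] K2) (-(u * p)) * γ
      - algebraMap F (K1 ⊗[F] K2) (u ^ 2 * q + p ^ 2 * v - 4 * (v * q)) := by
    simp only [map_add, map_sub, map_mul, map_pow, map_neg, map_ofNat]
    rw [hγdef]
    linear_combination (2 * B - algebraMap F (K1 ⊗[F] K2) p) ^ 2 * hA2 +
      ((algebraMap F (K1 ⊗[F] K2) u) ^ 2 - 4 * algebraMap F (K1 ⊗[F] K2) v) * hB2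
  have hcomb := fun x00 x10 x01 x11 h =>
    stmt7.tensor_indep hK1 hK2 hα hβ x00 x10 x01 x11 h
  have hγnotF : γ ∉ Set.range (algebraMap F (K1 ⊗[F] K2)) := by
    rintro ⟨c, hc⟩
    have h0 : algebraMap F (K1 ⊗[F] K2) c
        + algebraMap F (K1 ⊗[F] K2) p * (α ⊗ₜ 1)
        + algebraMap F (K1 ⊗[F] K2) u * ((1 : K1) ⊗ₜ β)
        + algebraMap F (K1 ⊗[F] K2) (-2) * (α ⊗ₜ β) = 0 := by
      rw [← hAB, ← hAdef, ← hBdef]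
      simp only [map_neg, map_ofNat]
      linear_combination hc + hγdef
    obtain ⟨e0, e1, e2, e3⟩ := hcomb _ _ _ _ h0
    have h2z : (2 : F) = 0 := by linear_combination -e3
    exact hp2 h2z e1
  -- dimension of K3
  haveI : Module.Finite F (K1 ⊗[F] K2) := Module.Finite.tensorProduct F K1 K2
  have hrank4 : finrank F (K1 ⊗[F] K2) = 4 := by
    rw [Module.finrank_tensorProduct, hK1, hK2]
  set L : (K1 ⊗[F] K2) →ₗ[F] (K1 ⊗[F] K2) := τ3.toLinearMap - LinearMap.id with hLdef
  have hLapp : ∀ z, L z = τ3 z - z := by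
    intro z; rw [hLdef]; simp
  have hkerK3 : Subalgebra.toSubmodule K3 = LinearMap.ker L := by
    ext z
    rw [LinearMap.mem_ker, hLapp, sub_eq_zero]
    exact Iff.rfl
  have hLA : L A = algebraMap F (K1 ⊗[F] K2) u - A - A := by
    rw [hLapp, hτA]
  have hLB : L B = algebraMap F (K1 ⊗[F] K2) p - B - B := by
    rw [hLapp, hτB]
  have hLAB : L (A * B) = algebraMap F (K1 ⊗[F] K2) (u * p)
      - algebraMap F (K1 ⊗[F] K2) p * A - algebraMap F (K1 ⊗[F] K2) u * B := by
    have hmul3 : τ3 (A * B) = (algebraMap F (K1 ⊗[F] K2) u - A) *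
        (algebraMap F (K1 ⊗[F] K2) p - B) := by
      rw [map_mul, hτA, hτB]
    rw [hLapp, hmul3, map_mul]
    ring
  have hrange2 : 2 ≤ finrank F ↥(LinearMap.range L) := by
    by_cases h20 : (2 : F) = 0
    · -- characteristic 2 : use L A and L (A*B)
      have hli2 : LinearIndependent F ![L A, L (A * B)] := by
        rw [LinearIndependent.pair_iff]
        intro s t hst
        rw [hLA, hLAB] at hst
        have h0 : algebraMap F (K1 ⊗[F] K2) (s * u + t * (u * p))
            + algebraMap F (K1 ⊗[F] K2) (-(2 * s) - t * p) * (α ⊗ₜ 1)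
            + algebraMap F (K1 ⊗[F] K2) (-(t * u)) * ((1 : K1) ⊗ₜ β)
            + algebraMap F (K1 ⊗[F] K2) 0 * (α ⊗ₜ β) = 0 := by
          rw [← hAB, ← hAdef, ← hBdef]
          simp only [map_add, map_sub, map_mul, map_neg, map_ofNat, map_zero, zero_mul]
          simp only [Algebra.smul_def, map_mul] at hst
          linear_combination hst
        obtain ⟨e0, e1, e2, e3⟩ := hcomb _ _ _ _ h0
        have ht : t = 0 := by
          have : t * u = 0 := by linear_combination -e2
          rcases mul_eq_zero.mp this with h | h
          · exact h
          · exact (hu2 h20 h).elim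
        subst ht
        refine ⟨?_, rfl⟩
        have : s * u = 0 := by linear_combination e0
        rcases mul_eq_zero.mp this with h | h
        · exact h
        · exact (hu2 h20 h).elim
      have hsple : Submodule.span F {L A, L (A * B)} ≤ LinearMap.range L := by
        rw [Submodule.span_le]
        rintro z hz
        rcases hz with rfl | rfl
        · exact ⟨A, rfl⟩
        · exact ⟨A * B, rfl⟩
      have hfr : finrank F ↥(Submodule.span F {L A, L (A * B)}) = 2 := by
        have h := finrank_span_eq_card hli2
        have hre : Set.range ![L A, L (A * B)] = {L A, L (A * B)} :=
          Matrix.range_cons_cons_empty _ _ _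
        rw [hre] at h
        simpa using h
      calc (2 : ℕ) = finrank F ↥(Submodule.span F {L A, L (A * B)}) := hfr.symm
        _ ≤ finrank F ↥(LinearMap.range L) := Submodule.finrank_mono hsple
    · -- characteristic ≠ 2 : use L A and L B
      have hli2 : LinearIndependent F ![L A, L B] := by
        rw [LinearIndependent.pair_iff]
        intro s t hst
        rw [hLA, hLB] at hst
        have h0 : algebraMap F (K1 ⊗[F] K2) (s * u + t * p)
            + algebraMap F (K1 ⊗[F] K2) (-(2 * s)) * (α ⊗ₜ 1)
            + algebraMap F (K1 ⊗[F] K2) (-(2 * t)) * ((1 : K1) ⊗ₜ β)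
            + algebraMap F (K1 ⊗[F] K2) 0 * (α ⊗ₜ β) = 0 := by
          rw [← hAdef, ← hBdef]
          simp only [map_add, map_sub, map_mul, map_neg, map_ofNat, map_zero, zero_mul]
          simp only [Algebra.smul_def, map_mul] at hst
          linear_combination hst
        obtain ⟨e0, e1, e2, e3⟩ := hcomb _ _ _ _ h0
        constructor
        · have : (2 : F) * s = 0 := by linear_combination -e1
          rcases mul_eq_zero.mp this with h | h
          · exact (h20 h).elim
          · exact h
        · have : (2 : F) * t = 0 := by linear_combination -e2
          rcases mul_eq_zero.mp this with h | h
          · exact (h20 h).elim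
          · exact h
      have hsple : Submodule.span F {L A, L B} ≤ LinearMap.range L := by
        rw [Submodule.span_le]
        rintro z hz
        rcases hz with rfl | rfl
        · exact ⟨A, rfl⟩
        · exact ⟨B, rfl⟩
      have hfr : finrank F ↥(Submodule.span F {L A, L B}) = 2 := by
        have h := finrank_span_eq_card hli2
        have hre : Set.range ![L A, L B] = {L A, L B} :=
          Matrix.range_cons_cons_empty _ _ _
        rw [hre] at h
        simpa using h
      calc (2 : ℕ) = finrank F ↥(Submodule.span F {L A, L B}) := hfr.symm
        _ ≤ finrank F ↥(LinearMap.range L) := Submodule.finrank_mono hsple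
  have hK3le : finrank F ↥(Subalgebra.toSubmodule K3) ≤ 2 := by
    rw [hkerK3]
    have hr := LinearMap.finrank_range_add_finrank_ker L
    rw [hrank4] at hr
    omega
  -- span of 1 and γ
  have h1K3 : (1 : K1 ⊗[F] K2) ∈ K3 := (map_one τ3 : τ3 1 = 1)
  have hsp : Submodule.span F {(1 : K1 ⊗[F] K2), γ} ≤ Subalgebra.toSubmodule K3 := by
    rw [Submodule.span_le]
    rintro z hz
    rcases hz with rfl | rfl
    · exact h1K3
    · exact hγK3
  have hli1γ : LinearIndependent F ![(1 : K1 ⊗[F] K2), γ] := by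
    rw [LinearIndependent.pair_iff]
    intro s t hst
    have h0 : algebraMap F (K1 ⊗[F] K2) s
        + algebraMap F (K1 ⊗[F] K2) (-(t * p)) * (α ⊗ₜ 1)
        + algebraMap F (K1 ⊗[F] K2) (-(t * u)) * ((1 : K1) ⊗ₜ β)
        + algebraMap F (K1 ⊗[F] K2) (2 * t) * (α ⊗ₜ β) = 0 := by
      rw [← hAB, ← hAdef, ← hBdef]
      simp only [map_add, map_sub, map_mul, map_neg, map_ofNat, map_zero, zero_mul]
      rw [Algebra.smul_def, Algebra.smul_def] at hst
      rw [mul_one] at hst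
      linear_combination hst + algebraMap F (K1 ⊗[F] K2) t * hγdef
    obtain ⟨e0, e1, e2, e3⟩ := hcomb _ _ _ _ h0
    have ht : t = 0 := by
      by_cases h20 : (2 : F) = 0
      · have : t * p = 0 := by linear_combination -e1
        rcases mul_eq_zero.mp this with h | h
        · exact h
        · exact (hp2 h20 h).elim
      · have : (2 : F) * t = 0 := by linear_combination e3
        rcases mul_eq_zero.mp this with h | h
        · exact (h20 h).elim
        · exact h
    subst ht
    refine ⟨by linear_combination e0, rfl⟩
  have hspfr : finrank F ↥(Submodule.span F {(1 : K1 ⊗[F] K2), γ}) = 2 := by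
    have h := finrank_span_eq_card hli1γ
    have hre : Set.range ![(1 : K1 ⊗[F] K2), γ] = {(1 : K1 ⊗[F] K2), γ} :=
      Matrix.range_cons_cons_empty _ _ _
    rw [hre] at h
    simpa using h
  have heq : Submodule.span F {(1 : K1 ⊗[F] K2), γ} = Subalgebra.toSubmodule K3 :=
    Submodule.eq_of_le_of_finrank_le hsp (by rw [hspfr]; exact hK3le)
  have hK3fr : finrank F ↥K3 = 2 := by
    have h : finrank F ↥(Subalgebra.toSubmodule K3) = 2 := by rw [← heq, hspfr]
    exact h
  -- the element Ω of K3
  have hΩnot : (⟨γ, hγK3⟩ : K3) ∉ Set.range (algebraMap F ↥K3) := by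
    rintro ⟨c, hc⟩
    refine hγnotF ⟨c, ?_⟩
    have h := congrArg Subtype.val hc
    simpa using h
  have hΩsq : (⟨γ, hγK3⟩ : K3) ^ 2 = algebraMap F ↥K3 (-(u * p)) * (⟨γ, hγK3⟩ : K3)
      - algebraMap F ↥K3 (u ^ 2 * q + p ^ 2 * v - 4 * (v * q)) := by
    apply Subtype.ext
    simp only [SubmonoidClass.coe_pow, MulMemClass.coe_mul, AddSubgroupClass.coe_sub,
      Subalgebra.coe_algebraMap]
    exact hγsq
  -- data for F × F
  have hFF2 : finrank F (F × F) = 2 := by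
    simp [Module.finrank_prod]
  have hffnot : ((1 : F), (0 : F)) ∉ Set.range (algebraMap F (F × F)) := by
    rintro ⟨c, hc⟩
    have h1 := congrArg Prod.fst hc
    have h2 := congrArg Prod.snd hc
    simp at h1 h2
    rw [h1] at h2
    exact one_ne_zero h2
  have hffsq : ((1 : F), (0 : F)) ^ 2 = algebraMap F (F × F) 1 * ((1 : F), (0 : F))
      - algebraMap F (F × F) 0 := by
    simp [Prod.ext_iff]
  rw [stmt7.iso_iff hK1 hK2 hα hαsq hβ hβsq,
    stmt7.iso_iff hK3fr hFF2 hΩnot hΩsq hffnot hffsq]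
  exact stmt7.arith u v p q hD1 hD2 (fun h => ⟨hu2 h, hp2 h⟩)
end
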